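/- arXiv:2411.19476 — 5 statements merged into one kernel-verified Lean document; each statement's English description precedes it below -/
import Mathlib

section
/- Let G = G_l ⊗ G_r be a true twin composition, assume D_k(H) ≠ ∅ for each H ∈ {G, G_l, G_r} and each 0 ≤ k ≤ |TS(H)|, and assume Equation (2) holds for G_l and for G_r. Then γ_{α(G)+2i}(G) = min(G) for every integer 0 ≤ i ≤ (β(G) − α(G))/2. -/
/-- A finite simple graph on a subset of an ambient vertex type `α`,
together with a designated twin set `TS ⊆ verts`. -/
structure TSGraph (α : Type*) where
  verts : Finset α
  Adj : α → α → Prop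
  symm : ∀ u v, Adj u v → Adj v u
  irrefl : ∀ u, ¬ Adj u u
  adj_mem : ∀ u v, Adj u v → u ∈ verts ∧ v ∈ verts
  TS : Finset α
  TS_sub : TS ⊆ verts

namespace TSGraph

variable {α : Type*} [DecidableEq α]

/-- `f` encodes a perfect matching of the subgraph of `G` induced by `S`:
every vertex of `S` is paired with an adjacent vertex of `S`, involutively. -/
def IsPM (G : TSGraph α) (S : Finset α) (f : α → α) : Prop :=
  ∀ v ∈ S, f v ∈ S ∧ G.Adj v (f v) ∧ f (f v) = v

/-- `S ⊆ V(G)` dominates `V(G) − TS(G)` and, for some `X ⊆ S ∩ TS(G)` of size `k`,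
the subgraph induced by `S − X` has a perfect matching. -/
def Adm (G : TSGraph α) (k : ℕ) (S : Finset α) : Prop :=
  S ⊆ G.verts ∧
  (∀ v ∈ G.verts, v ∉ G.TS → v ∈ S ∨ ∃ u ∈ S, G.Adj u v) ∧
  ∃ X ⊆ S ∩ G.TS, X.card = k ∧ ∃ f, G.IsPM (S \ X) f

/-- Membership in the family `D_k(G)`: admissible of minimum cardinality. -/
def memD (G : TSGraph α) (k : ℕ) (S : Finset α) : Prop :=
  G.Adm k S ∧ ∀ S', G.Adm k S' → S.card ≤ S'.card

/-- `D_k(G) ≠ ∅`. -/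
def DkNonempty (G : TSGraph α) (k : ℕ) : Prop := ∃ S, G.memD k S

/-- `D_k(G) ≠ ∅` for all `0 ≤ k ≤ |TS(G)|`. -/
def AllDkNonempty (G : TSGraph α) : Prop := ∀ k ≤ G.TS.card, G.DkNonempty k

/-- `γ_k(G)`: the common cardinality of the members of `D_k(G)`. -/
noncomputable def gamma (G : TSGraph α) (k : ℕ) : ℕ :=
  sInf {n | ∃ S, G.Adm k S ∧ S.card = n}

/-- A paired-dominating set of `G`. -/
def IsPDS (G : TSGraph α) (D : Finset α) : Prop :=
  D ⊆ G.verts ∧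
  (∀ v ∈ G.verts, v ∈ D ∨ ∃ u ∈ D, G.Adj u v) ∧
  ∃ f, G.IsPM D f

/-- `γ_p(G)`: the paired-domination number. -/
noncomputable def gammaP (G : TSGraph α) : ℕ :=
  sInf {n | ∃ D, G.IsPDS D ∧ D.card = n}

/-- Membership in `D_p(G)`: minimum-cardinality paired-dominating sets. -/
def memDp (G : TSGraph α) (D : Finset α) : Prop :=
  G.IsPDS D ∧ D.card = G.gammaP

/-- `min(G) = min { γ_k(G) : 0 ≤ k ≤ |TS(G)| }`. -/
noncomputable def minVal (G : TSGraph α) : ℕ :=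
  sInf {n | ∃ k ≤ G.TS.card, G.gamma k = n}

/-- `α(G)`: the smallest `k` with `γ_k(G) = min(G)`. -/
noncomputable def alphaVal (G : TSGraph α) : ℕ :=
  sInf {k | k ≤ G.TS.card ∧ G.gamma k = G.minVal}

/-- `β(G)`: the largest `k` with `γ_k(G) = min(G)`. -/
noncomputable def betaVal (G : TSGraph α) : ℕ :=
  sSup {k | k ≤ G.TS.card ∧ G.gamma k = G.minVal}

/-- Membership in `Ψ(G)`: sets in some `D_k(G)` of cardinality `min(G)`. -/
def memPsi (G : TSGraph α) (D : Finset α) : Prop :=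
  (∃ k, k ≤ G.TS.card ∧ G.memD k D) ∧ D.card = G.minVal

/-- Equation (2) holds for `G`. -/
def Eq2Holds (G : TSGraph α) : Prop :=
  ∀ k ≤ G.TS.card,
    (k ≤ G.alphaVal → G.gamma k = G.minVal + G.alphaVal - k) ∧
    (G.betaVal ≤ k → G.gamma k = G.minVal + k - G.betaVal) ∧
    (G.alphaVal < k → k < G.betaVal → Even (k - G.alphaVal) → G.gamma k = G.minVal) ∧
    (G.alphaVal < k → k < G.betaVal → ¬ Even (k - G.alphaVal) → G.gamma k = G.minVal + 1)

/-- `G = Gl ⊗ Gr` (true twin composition). -/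
def IsTrueTwin (G Gl Gr : TSGraph α) : Prop :=
  Disjoint Gl.verts Gr.verts ∧
  G.verts = Gl.verts ∪ Gr.verts ∧
  (∀ u v, G.Adj u v ↔ Gl.Adj u v ∨ Gr.Adj u v ∨
    (u ∈ Gl.TS ∧ v ∈ Gr.TS) ∨ (u ∈ Gr.TS ∧ v ∈ Gl.TS)) ∧
  G.TS = Gl.TS ∪ Gr.TS

/-- `G = Gl ⊙ Gr` (false twin composition). -/
def IsFalseTwin (G Gl Gr : TSGraph α) : Prop :=
  Disjoint Gl.verts Gr.verts ∧
  G.verts = Gl.verts ∪ Gr.verts ∧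
  (∀ u v, G.Adj u v ↔ Gl.Adj u v ∨ Gr.Adj u v) ∧
  G.TS = Gl.TS ∪ Gr.TS

/-- `G = Gl ⊕ Gr` (attachment composition). -/
def IsAttach (G Gl Gr : TSGraph α) : Prop :=
  Disjoint Gl.verts Gr.verts ∧
  G.verts = Gl.verts ∪ Gr.verts ∧
  (∀ u v, G.Adj u v ↔ Gl.Adj u v ∨ Gr.Adj u v ∨
    (u ∈ Gl.TS ∧ v ∈ Gr.TS) ∨ (u ∈ Gr.TS ∧ v ∈ Gl.TS)) ∧
  G.TS = Gl.TS

/-- The twin-set graph `G` arises from a decomposition tree all of whose associated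
twin-set graphs satisfy the property `P`. -/
inductive FromDecompTree (P : TSGraph α → Prop) : TSGraph α → Prop where
  | single (G : TSGraph α) (v : α) (hv : G.verts = {v}) (hts : G.TS = {v})
      (hadj : ∀ u w, ¬ G.Adj u w) (hP : P G) : FromDecompTree P G
  | ttwin (G Gl Gr : TSGraph α) (hl : FromDecompTree P Gl) (hr : FromDecompTree P Gr)
      (h : IsTrueTwin G Gl Gr) (hP : P G) : FromDecompTree P G
  | ftwin (G Gl Gr : TSGraph α) (hl : FromDecompTree P Gl) (hr : FromDecompTree P Gr)
      (h : IsFalseTwin G Gl Gr) (hP : P G) : FromDecompTree P G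
  | attach (G Gl Gr : TSGraph α) (hl : FromDecompTree P Gl) (hr : FromDecompTree P Gr)
      (h : IsAttach G Gl Gr) (hP : P G) : FromDecompTree P G

end TSGraph

namespace TSGraph

variable {α : Type*} [DecidableEq α]

-- ===== helpers =====

lemma adm_k_le {G : TSGraph α} {k : ℕ} {S : Finset α} (h : G.Adm k S) : k ≤ G.TS.card := by
  obtain ⟨-, -, X, hX, hc, -⟩ := h
  calc k = X.card := hc.symm
    _ ≤ (S ∩ G.TS).card := Finset.card_le_card hX
    _ ≤ G.TS.card := Finset.card_le_card Finset.inter_subset_right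

lemma gamma_le {G : TSGraph α} {k : ℕ} {S : Finset α} (h : G.Adm k S) : G.gamma k ≤ S.card :=
  Nat.sInf_le ⟨S, h, rfl⟩

lemma gamma_attained {G : TSGraph α} {k : ℕ} (h : G.DkNonempty k) :
    ∃ S, G.Adm k S ∧ S.card = G.gamma k := by
  obtain ⟨S, hS, -⟩ := h
  have h2 : G.gamma k ∈ {n | ∃ S, G.Adm k S ∧ S.card = n} := Nat.sInf_mem ⟨S.card, S, hS, rfl⟩
  exact h2

lemma minVal_le_gamma {G : TSGraph α} {k : ℕ} (h : k ≤ G.TS.card) : G.minVal ≤ G.gamma k :=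
  Nat.sInf_le ⟨k, h, rfl⟩

lemma aset_nonempty (G : TSGraph α) :
    {k | k ≤ G.TS.card ∧ G.gamma k = G.minVal}.Nonempty := by
  have h : G.minVal ∈ {n | ∃ k ≤ G.TS.card, G.gamma k = n} :=
    Nat.sInf_mem ⟨G.gamma 0, 0, Nat.zero_le _, rfl⟩
  obtain ⟨k, hk, hg⟩ := h
  exact ⟨k, hk, hg⟩

lemma aset_bdd (G : TSGraph α) : BddAbove {k | k ≤ G.TS.card ∧ G.gamma k = G.minVal} :=
  ⟨G.TS.card, fun _ hx => hx.1⟩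

lemma alpha_mem (G : TSGraph α) : G.alphaVal ≤ G.TS.card ∧ G.gamma G.alphaVal = G.minVal :=
  Nat.sInf_mem (aset_nonempty G)

lemma beta_mem (G : TSGraph α) : G.betaVal ≤ G.TS.card ∧ G.gamma G.betaVal = G.minVal :=
  Nat.sSup_mem (aset_nonempty G) (aset_bdd G)

lemma le_beta {G : TSGraph α} {k : ℕ} (h1 : k ≤ G.TS.card) (h2 : G.gamma k = G.minVal) :
    k ≤ G.betaVal := le_csSup (aset_bdd G) ⟨h1, h2⟩

lemma alpha_le {G : TSGraph α} {k : ℕ} (h1 : k ≤ G.TS.card) (h2 : G.gamma k = G.minVal) :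
    G.alphaVal ≤ k := Nat.sInf_le ⟨h1, h2⟩

lemma even_offset {H : TSGraph α} (hH : H.Eq2Holds) {p : ℕ}
    (hp : p ≤ H.TS.card ∧ H.gamma p = H.minVal) (hlt : p < H.betaVal) :
    Even (p - H.alphaVal) := by
  rcases eq_or_lt_of_le (alpha_le hp.1 hp.2) with h | h
  · rw [← h]; simp
  · by_contra hodd
    have := (hH p hp.1).2.2.2 h hlt hodd
    omega

lemma mem_aset_of_even {H : TSGraph α} (hH : H.Eq2Holds) {p : ℕ}
    (h1 : H.alphaVal ≤ p) (h2 : p ≤ H.betaVal) (h3 : Even (p - H.alphaVal)) :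
    p ≤ H.TS.card ∧ H.gamma p = H.minVal := by
  have hb := beta_mem H
  have hcard : p ≤ H.TS.card := le_trans h2 hb.1
  rcases eq_or_lt_of_le h1 with h | h
  · exact ⟨hcard, by rw [← h]; exact (alpha_mem H).2⟩
  · rcases eq_or_lt_of_le h2 with h' | h'
    · exact ⟨hcard, by rw [h']; exact hb.2⟩
    · exact ⟨hcard, (hH p hcard).2.2.1 h h' h3⟩

section Comp

variable {G Gl Gr : TSGraph α}

lemma notBoth (hcomp : IsTrueTwin G Gl Gr) {v : α} (h1 : v ∈ Gl.verts) (h2 : v ∈ Gr.verts) :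
    False := Finset.disjoint_left.mp hcomp.1 h1 h2

lemma adj_left (hcomp : IsTrueTwin G Gl Gr) {u v : α} (h : G.Adj u v)
    (hu : u ∈ Gl.verts) (hv : v ∈ Gl.verts) : Gl.Adj u v := by
  rcases (hcomp.2.2.1 u v).mp h with h | h | ⟨h1, h2⟩ | ⟨h1, h2⟩
  · exact h
  · exact absurd (Gr.adj_mem _ _ h).1 (fun hh => notBoth hcomp hu hh)
  · exact absurd (Gr.TS_sub h2) (fun hh => notBoth hcomp hv hh)
  · exact absurd (Gr.TS_sub h1) (fun hh => notBoth hcomp hu hh)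

lemma adj_right (hcomp : IsTrueTwin G Gl Gr) {u v : α} (h : G.Adj u v)
    (hu : u ∈ Gr.verts) (hv : v ∈ Gr.verts) : Gr.Adj u v := by
  rcases (hcomp.2.2.1 u v).mp h with h | h | ⟨h1, h2⟩ | ⟨h1, h2⟩
  · exact absurd (Gl.adj_mem _ _ h).1 (fun hh => notBoth hcomp hh hu)
  · exact h
  · exact absurd (Gl.TS_sub h1) (fun hh => notBoth hcomp hh hu)
  · exact absurd (Gl.TS_sub h2) (fun hh => notBoth hcomp hh hv)

lemma adj_cross (hcomp : IsTrueTwin G Gl Gr) {u v : α} (h : G.Adj u v)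
    (hu : u ∈ Gl.verts) (hv : v ∈ Gr.verts) : u ∈ Gl.TS ∧ v ∈ Gr.TS := by
  rcases (hcomp.2.2.1 u v).mp h with h | h | ⟨h1, h2⟩ | ⟨h1, h2⟩
  · exact absurd (Gl.adj_mem _ _ h).2 (fun hh => notBoth hcomp hh hv)
  · exact absurd (Gr.adj_mem _ _ h).1 (fun hh => notBoth hcomp hu hh)
  · exact ⟨h1, h2⟩
  · exact absurd (Gr.TS_sub h1) (fun hh => notBoth hcomp hu hh)

lemma cross_adj (hcomp : IsTrueTwin G Gl Gr) {u v : α} (hu : u ∈ Gl.TS) (hv : v ∈ Gr.TS) :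
    G.Adj u v := (hcomp.2.2.1 u v).mpr (Or.inr (Or.inr (Or.inl ⟨hu, hv⟩)))

lemma union_split (hcomp : IsTrueTwin G Gl Gr) {S : Finset α} (hS : S ⊆ G.verts) :
    (S ∩ Gl.verts) ∪ (S ∩ Gr.verts) = S := by
  ext v
  simp only [Finset.mem_union, Finset.mem_inter]
  constructor
  · rintro (⟨h, -⟩ | ⟨h, -⟩) <;> exact h
  · intro hv
    have := hS hv
    rw [hcomp.2.1, Finset.mem_union] at this
    rcases this with h | h
    · exact Or.inl ⟨hv, h⟩
    · exact Or.inr ⟨hv, h⟩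

lemma card_split (hcomp : IsTrueTwin G Gl Gr) {S : Finset α} (hS : S ⊆ G.verts) :
    S.card = (S ∩ Gl.verts).card + (S ∩ Gr.verts).card := by
  rw [← union_split hcomp hS, Finset.card_union_of_disjoint]
  · rw [union_split hcomp hS]
  · exact Finset.disjoint_left.mpr (fun a ha hb =>
      notBoth hcomp (Finset.mem_inter.mp ha).2 (Finset.mem_inter.mp hb).2)

lemma TS_card_eq (hcomp : IsTrueTwin G Gl Gr) : G.TS.card = Gl.TS.card + Gr.TS.card := by
  rw [hcomp.2.2.2]
  exact Finset.card_union_of_disjoint (Finset.disjoint_left.mpr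
    (fun a ha hb => notBoth hcomp (Gl.TS_sub ha) (Gr.TS_sub hb)))


lemma split (hcomp : IsTrueTwin G Gl Gr) {k : ℕ} {S : Finset α} (hS : G.Adm k S) :
    ∃ pl pr c, c ≤ pl ∧ c ≤ pr ∧ pl + pr = k + 2 * c ∧
      Gl.Adm pl (S ∩ Gl.verts) ∧ Gr.Adm pr (S ∩ Gr.verts) := by
  classical
  obtain ⟨hsub, hdom, X, hXsub, hXcard, f, hf⟩ := hS
  have hSv : ∀ v ∈ S, v ∈ Gl.verts ∨ v ∈ Gr.verts := by
    intro v hv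
    have := hsub hv
    rw [hcomp.2.1, Finset.mem_union] at this
    exact this
  set M : Finset α := (S \ X).filter (fun v => v ∈ Gl.verts ∧ f v ∈ Gr.verts) with hMdef
  set M' : Finset α := (S \ X).filter (fun v => v ∈ Gr.verts ∧ f v ∈ Gl.verts) with hM'def
  have hMmem : ∀ v, v ∈ M ↔ (v ∈ S ∧ v ∉ X) ∧ v ∈ Gl.verts ∧ f v ∈ Gr.verts := by
    intro v; rw [hMdef]; simp [Finset.mem_filter, Finset.mem_sdiff]
  have hM'mem : ∀ v, v ∈ M' ↔ (v ∈ S ∧ v ∉ X) ∧ v ∈ Gr.verts ∧ f v ∈ Gl.verts := by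
    intro v; rw [hM'def]; simp [Finset.mem_filter, Finset.mem_sdiff]
  -- f maps M to M' and back
  have hfM : ∀ v ∈ M, f v ∈ M' := by
    intro v hv
    rw [hMmem] at hv
    obtain ⟨⟨hv1, hv2⟩, hv3, hv4⟩ := hv
    obtain ⟨h1, h2, h3⟩ := hf v (Finset.mem_sdiff.mpr ⟨hv1, hv2⟩)
    rw [hM'mem]
    refine ⟨⟨(Finset.mem_sdiff.mp h1).1, (Finset.mem_sdiff.mp h1).2⟩, ?_⟩
    rw [h3]; exact ⟨hv4, hv3⟩
  have hfM' : ∀ v ∈ M', f v ∈ M := by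
    intro v hv
    rw [hM'mem] at hv
    obtain ⟨⟨hv1, hv2⟩, hv3, hv4⟩ := hv
    obtain ⟨h1, h2, h3⟩ := hf v (Finset.mem_sdiff.mpr ⟨hv1, hv2⟩)
    rw [hMmem]
    refine ⟨⟨(Finset.mem_sdiff.mp h1).1, (Finset.mem_sdiff.mp h1).2⟩, ?_⟩
    rw [h3]; exact ⟨hv4, hv3⟩
  have hInv : ∀ v ∈ S \ X, f (f v) = v := fun v hv => (hf v hv).2.2
  have hMcard : M.card = M'.card := by
    apply Finset.card_bij' (fun v _ => f v) (fun v _ => f v) hfM hfM'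
    · intro a ha
      have : a ∈ S \ X := by
        rw [hMmem] at ha; exact Finset.mem_sdiff.mpr ⟨ha.1.1, ha.1.2⟩
      exact hInv a this
    · intro a ha
      have : a ∈ S \ X := by
        rw [hM'mem] at ha; exact Finset.mem_sdiff.mpr ⟨ha.1.1, ha.1.2⟩
      exact hInv a this
  have hXv : X ⊆ G.verts := fun v hv => hsub (Finset.mem_inter.mp (hXsub hv)).1
  have hXTS : ∀ v ∈ X, v ∈ G.TS := fun v hv => (Finset.mem_inter.mp (hXsub hv)).2
  have hXS : ∀ v ∈ X, v ∈ S := fun v hv => (Finset.mem_inter.mp (hXsub hv)).1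
  have hXcardsplit : (X ∩ Gl.verts).card + (X ∩ Gr.verts).card = k := by
    rw [← card_split hcomp hXv, hXcard]
  -- left admissible set
  have hleft : Gl.Adm ((X ∩ Gl.verts).card + M.card) (S ∩ Gl.verts) := by
    refine ⟨Finset.inter_subset_right, ?_, (X ∩ Gl.verts) ∪ M, ?_, ?_, f, ?_⟩
    · -- domination
      intro v hv hvTS
      have hvG : v ∈ G.verts := by rw [hcomp.2.1]; exact Finset.mem_union_left _ hv
      have hvnTS : v ∉ G.TS := by
        rw [hcomp.2.2.2, Finset.mem_union]
        rintro (h | h)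
        · exact hvTS h
        · exact notBoth hcomp hv (Gr.TS_sub h)
      rcases hdom v hvG hvnTS with h | ⟨u, hu, huv⟩
      · exact Or.inl (Finset.mem_inter.mpr ⟨h, hv⟩)
      · rcases hSv u hu with hul | hur
        · exact Or.inr ⟨u, Finset.mem_inter.mpr ⟨hu, hul⟩, adj_left hcomp huv hul hv⟩
        · exact absurd (adj_cross hcomp (G.symm u v huv) hv hur).1 hvTS
    · -- X' ⊆ Sl ∩ TSl
      intro v hv
      rcases Finset.mem_union.mp hv with h | h
      · obtain ⟨h1, h2⟩ := Finset.mem_inter.mp h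
        refine Finset.mem_inter.mpr ⟨Finset.mem_inter.mpr ⟨hXS v h1, h2⟩, ?_⟩
        have := hXTS v h1
        rw [hcomp.2.2.2, Finset.mem_union] at this
        rcases this with h3 | h3
        · exact h3
        · exact absurd (Gr.TS_sub h3) (fun hh => notBoth hcomp h2 hh)
      · rw [hMmem] at h
        obtain ⟨⟨h1, h2⟩, h3, h4⟩ := h
        refine Finset.mem_inter.mpr ⟨Finset.mem_inter.mpr ⟨h1, h3⟩, ?_⟩
        exact (adj_cross hcomp (hf v (Finset.mem_sdiff.mpr ⟨h1, h2⟩)).2.1 h3 h4).1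
    · -- cardinality
      rw [Finset.card_union_of_disjoint]
      exact Finset.disjoint_left.mpr (fun a ha hb => by
        rw [hMmem] at hb
        exact hb.1.2 (Finset.mem_inter.mp ha).1)
    · -- perfect matching
      intro v hv
      simp only [Finset.mem_sdiff, Finset.mem_inter, Finset.mem_union] at hv
      obtain ⟨⟨hvS, hvVl⟩, hvX⟩ := hv
      push_neg at hvX
      obtain ⟨hvX1, hvX2⟩ := hvX
      have hvnX : v ∉ X := fun h => hvX1 h hvVl
      have hvSX : v ∈ S \ X := Finset.mem_sdiff.mpr ⟨hvS, hvnX⟩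
      obtain ⟨h1, h2, h3⟩ := hf v hvSX
      obtain ⟨hfvS, hfvnX⟩ := Finset.mem_sdiff.mp h1
      have hfvVl : f v ∈ Gl.verts := by
        rcases hSv _ hfvS with h | h
        · exact h
        · exact absurd ((hMmem v).mpr ⟨⟨hvS, hvnX⟩, hvVl, h⟩) hvX2
      have hfvnM : f v ∉ M := by
        intro hh
        rw [hMmem] at hh
        rw [h3] at hh
        exact notBoth hcomp hvVl hh.2.2
      refine ⟨?_, adj_left hcomp h2 hvVl hfvVl, h3⟩
      simp only [Finset.mem_sdiff, Finset.mem_inter, Finset.mem_union]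
      refine ⟨⟨hfvS, hfvVl⟩, ?_⟩
      push_neg
      exact ⟨fun h => (hfvnX h).elim, hfvnM⟩
  -- right admissible set (mirror)
  have hright : Gr.Adm ((X ∩ Gr.verts).card + M'.card) (S ∩ Gr.verts) := by
    refine ⟨Finset.inter_subset_right, ?_, (X ∩ Gr.verts) ∪ M', ?_, ?_, f, ?_⟩
    · intro v hv hvTS
      have hvG : v ∈ G.verts := by rw [hcomp.2.1]; exact Finset.mem_union_right _ hv
      have hvnTS : v ∉ G.TS := by
        rw [hcomp.2.2.2, Finset.mem_union]
        rintro (h | h)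
        · exact notBoth hcomp (Gl.TS_sub h) hv
        · exact hvTS h
      rcases hdom v hvG hvnTS with h | ⟨u, hu, huv⟩
      · exact Or.inl (Finset.mem_inter.mpr ⟨h, hv⟩)
      · rcases hSv u hu with hul | hur
        · exact absurd (adj_cross hcomp huv hul hv).2 hvTS
        · exact Or.inr ⟨u, Finset.mem_inter.mpr ⟨hu, hur⟩, adj_right hcomp huv hur hv⟩
    · intro v hv
      rcases Finset.mem_union.mp hv with h | h
      · obtain ⟨h1, h2⟩ := Finset.mem_inter.mp h
        refine Finset.mem_inter.mpr ⟨Finset.mem_inter.mpr ⟨hXS v h1, h2⟩, ?_⟩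
        have := hXTS v h1
        rw [hcomp.2.2.2, Finset.mem_union] at this
        rcases this with h3 | h3
        · exact absurd (Gl.TS_sub h3) (fun hh => notBoth hcomp hh h2)
        · exact h3
      · rw [hM'mem] at h
        obtain ⟨⟨h1, h2⟩, h3, h4⟩ := h
        refine Finset.mem_inter.mpr ⟨Finset.mem_inter.mpr ⟨h1, h3⟩, ?_⟩
        exact (adj_cross hcomp (G.symm _ _ (hf v (Finset.mem_sdiff.mpr ⟨h1, h2⟩)).2.1) h4 h3).2
    · rw [Finset.card_union_of_disjoint]
      exact Finset.disjoint_left.mpr (fun a ha hb => by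
        rw [hM'mem] at hb
        exact hb.1.2 (Finset.mem_inter.mp ha).1)
    · intro v hv
      simp only [Finset.mem_sdiff, Finset.mem_inter, Finset.mem_union] at hv
      obtain ⟨⟨hvS, hvVr⟩, hvX⟩ := hv
      push_neg at hvX
      obtain ⟨hvX1, hvX2⟩ := hvX
      have hvnX : v ∉ X := fun h => hvX1 h hvVr
      have hvSX : v ∈ S \ X := Finset.mem_sdiff.mpr ⟨hvS, hvnX⟩
      obtain ⟨h1, h2, h3⟩ := hf v hvSX
      obtain ⟨hfvS, hfvnX⟩ := Finset.mem_sdiff.mp h1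
      have hfvVr : f v ∈ Gr.verts := by
        rcases hSv _ hfvS with h | h
        · exact absurd ((hM'mem v).mpr ⟨⟨hvS, hvnX⟩, hvVr, h⟩) hvX2
        · exact h
      have hfvnM : f v ∉ M' := by
        intro hh
        rw [hM'mem] at hh
        rw [h3] at hh
        exact notBoth hcomp hh.2.2 hvVr
      refine ⟨?_, adj_right hcomp h2 hvVr hfvVr, h3⟩
      simp only [Finset.mem_sdiff, Finset.mem_inter, Finset.mem_union]
      refine ⟨⟨hfvS, hfvVr⟩, ?_⟩
      push_neg
      exact ⟨fun h => (hfvnX h).elim, hfvnM⟩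
  exact ⟨(X ∩ Gl.verts).card + M.card, (X ∩ Gr.verts).card + M'.card, M.card,
    Nat.le_add_left _ _, by rw [hMcard]; exact Nat.le_add_left _ _,
    by omega, hleft, hright⟩


lemma join (hcomp : IsTrueTwin G Gl Gr) {pl pr c k : ℕ} {Dl Dr : Finset α}
    (hDl : Gl.Adm pl Dl) (hDr : Gr.Adm pr Dr) (hcl : c ≤ pl) (hcr : c ≤ pr)
    (hk : pl + pr = k + 2 * c) : G.Adm k (Dl ∪ Dr) := by
  classical
  obtain ⟨hsubl, hdoml, Xl, hXl, hXlc, fl, hfl⟩ := hDl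
  obtain ⟨hsubr, hdomr, Xr, hXr, hXrc, fr, hfr⟩ := hDr
  obtain ⟨Cl, hCl, hClc⟩ := Finset.exists_subset_card_eq (show c ≤ Xl.card by omega)
  obtain ⟨Cr, hCr, hCrc⟩ := Finset.exists_subset_card_eq (show c ≤ Xr.card by omega)
  have hXlD : ∀ v ∈ Xl, v ∈ Dl := fun v hv => (Finset.mem_inter.mp (hXl hv)).1
  have hXlT : ∀ v ∈ Xl, v ∈ Gl.TS := fun v hv => (Finset.mem_inter.mp (hXl hv)).2
  have hXrD : ∀ v ∈ Xr, v ∈ Dr := fun v hv => (Finset.mem_inter.mp (hXr hv)).1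
  have hXrT : ∀ v ∈ Xr, v ∈ Gr.TS := fun v hv => (Finset.mem_inter.mp (hXr hv)).2
  have hDlV : ∀ v ∈ Dl, v ∈ Gl.verts := fun v hv => hsubl hv
  have hDrV : ∀ v ∈ Dr, v ∈ Gr.verts := fun v hv => hsubr hv
  have hClV : ∀ v ∈ Cl, v ∈ Gl.verts := fun v hv => hDlV v (hXlD v (hCl hv))
  have hCrV : ∀ v ∈ Cr, v ∈ Gr.verts := fun v hv => hDrV v (hXrD v (hCr hv))
  let σ : {x // x ∈ Cl} ≃ {x // x ∈ Cr} := Finset.equivOfCardEq (hClc.trans hCrc.symm)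
  let f' : α → α := fun v =>
    if h : v ∈ Cl then (σ ⟨v, h⟩ : α)
    else if h : v ∈ Cr then (σ.symm ⟨v, h⟩ : α)
    else if v ∈ Dl then fl v else fr v
  have hf'Cl : ∀ v (h : v ∈ Cl), f' v = (σ ⟨v, h⟩ : α) := by
    intro v h; simp only [f']; rw [dif_pos h]
  have hf'Cr : ∀ v (h : v ∈ Cr), f' v = (σ.symm ⟨v, h⟩ : α) := by
    intro v h
    have hnl : v ∉ Cl := fun hh => notBoth hcomp (hClV v hh) (hCrV v h)
    simp only [f']; rw [dif_neg hnl, dif_pos h]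
  have hf'Dl : ∀ v, v ∉ Cl → v ∉ Cr → v ∈ Dl → f' v = fl v := by
    intro v h1 h2 h3; simp only [f']; rw [dif_neg h1, dif_neg h2, if_pos h3]
  have hf'Dr : ∀ v, v ∉ Cl → v ∉ Cr → v ∉ Dl → f' v = fr v := by
    intro v h1 h2 h3; simp only [f']; rw [dif_neg h1, dif_neg h2, if_neg h3]
  refine ⟨?_, ?_, (Xl \ Cl) ∪ (Xr \ Cr), ?_, ?_, f', ?_⟩
  · rw [hcomp.2.1]; exact Finset.union_subset_union hsubl hsubr
  · -- domination
    intro v hv hvTS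
    rw [hcomp.2.1, Finset.mem_union] at hv
    rw [hcomp.2.2.2, Finset.mem_union] at hvTS
    push_neg at hvTS
    rcases hv with hv | hv
    · rcases hdoml v hv hvTS.1 with h | ⟨u, hu, huv⟩
      · exact Or.inl (Finset.mem_union_left _ h)
      · exact Or.inr ⟨u, Finset.mem_union_left _ hu, (hcomp.2.2.1 u v).mpr (Or.inl huv)⟩
    · rcases hdomr v hv hvTS.2 with h | ⟨u, hu, huv⟩
      · exact Or.inl (Finset.mem_union_right _ h)
      · exact Or.inr ⟨u, Finset.mem_union_right _ hu, (hcomp.2.2.1 u v).mpr (Or.inr (Or.inl huv))⟩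
  · -- X subset
    intro v hv
    rw [hcomp.2.2.2]
    rcases Finset.mem_union.mp hv with h | h
    · have h1 := Finset.mem_sdiff.mp h
      exact Finset.mem_inter.mpr ⟨Finset.mem_union_left _ (hXlD v h1.1),
        Finset.mem_union_left _ (hXlT v h1.1)⟩
    · have h1 := Finset.mem_sdiff.mp h
      exact Finset.mem_inter.mpr ⟨Finset.mem_union_right _ (hXrD v h1.1),
        Finset.mem_union_right _ (hXrT v h1.1)⟩
  · -- cardinality
    have hd : Disjoint (Xl \ Cl) (Xr \ Cr) := Finset.disjoint_left.mpr (fun a ha hb =>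
      notBoth hcomp (hDlV a (hXlD a (Finset.mem_sdiff.mp ha).1))
        (hDrV a (hXrD a (Finset.mem_sdiff.mp hb).1)))
    rw [Finset.card_union_of_disjoint hd, Finset.card_sdiff_of_subset hCl, Finset.card_sdiff_of_subset hCr]
    omega
  · -- perfect matching
    intro v hv
    simp only [Finset.mem_sdiff, Finset.mem_union] at hv
    obtain ⟨hvD, hvX⟩ := hv
    push_neg at hvX
    by_cases hvCl : v ∈ Cl
    · -- matched across to σ v
      have hw : (σ ⟨v, hvCl⟩ : α) ∈ Cr := (σ ⟨v, hvCl⟩).2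
      have hwDr : (σ ⟨v, hvCl⟩ : α) ∈ Dr := hXrD _ (hCr hw)
      have hwnCl : (σ ⟨v, hvCl⟩ : α) ∉ Cl := fun hh => notBoth hcomp (hClV _ hh) (hCrV _ hw)
      refine ⟨?_, ?_, ?_⟩
      · rw [hf'Cl v hvCl]
        simp only [Finset.mem_sdiff, Finset.mem_union]
        refine ⟨Or.inr hwDr, ?_⟩
        rintro (⟨ha, hb⟩ | ⟨ha, hb⟩)
        · exact notBoth hcomp (hDlV _ (hXlD _ ha)) (hCrV _ hw)
        · exact hb hw
      · rw [hf'Cl v hvCl]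
        exact cross_adj hcomp (hXlT v (hCl hvCl)) (hXrT _ (hCr hw))
      · rw [hf'Cl v hvCl, hf'Cr _ hw]
        have : (⟨(σ ⟨v, hvCl⟩ : α), hw⟩ : {x // x ∈ Cr}) = σ ⟨v, hvCl⟩ := Subtype.ext rfl
        rw [this, Equiv.symm_apply_apply]
    · by_cases hvCr : v ∈ Cr
      · have hw : (σ.symm ⟨v, hvCr⟩ : α) ∈ Cl := (σ.symm ⟨v, hvCr⟩).2
        have hwDl : (σ.symm ⟨v, hvCr⟩ : α) ∈ Dl := hXlD _ (hCl hw)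
        have hwnCr : (σ.symm ⟨v, hvCr⟩ : α) ∉ Cr := fun hh => notBoth hcomp (hClV _ hw) (hCrV _ hh)
        refine ⟨?_, ?_, ?_⟩
        · rw [hf'Cr v hvCr]
          simp only [Finset.mem_sdiff, Finset.mem_union]
          refine ⟨Or.inl hwDl, ?_⟩
          rintro (⟨ha, hb⟩ | ⟨ha, hb⟩)
          · exact hb hw
          · exact notBoth hcomp (hClV _ hw) (hDrV _ (hXrD _ ha))
        · rw [hf'Cr v hvCr]
          exact G.symm _ _ (cross_adj hcomp (hXlT _ (hCl hw)) (hXrT v (hCr hvCr)))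
        · rw [hf'Cr v hvCr, hf'Cl _ hw]
          have : (⟨(σ.symm ⟨v, hvCr⟩ : α), hw⟩ : {x // x ∈ Cl}) = σ.symm ⟨v, hvCr⟩ :=
            Subtype.ext rfl
          rw [this, Equiv.apply_symm_apply]
      · rcases hvD with hvDl | hvDr
        · -- matched inside Gl
          have hvnXl : v ∉ Xl := fun h => hvCl (hvX.1 h)
          obtain ⟨h1, h2, h3⟩ := hfl v (Finset.mem_sdiff.mpr ⟨hvDl, hvnXl⟩)
          obtain ⟨hw1, hw2⟩ := Finset.mem_sdiff.mp h1
          have hwnCl : fl v ∉ Cl := fun h => hw2 (hCl h)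
          have hwnCr : fl v ∉ Cr := fun h => notBoth hcomp (hDlV _ hw1) (hCrV _ h)
          rw [hf'Dl v hvCl hvCr hvDl]
          refine ⟨?_, (hcomp.2.2.1 v (fl v)).mpr (Or.inl h2), ?_⟩
          · simp only [Finset.mem_sdiff, Finset.mem_union]
            refine ⟨Or.inl hw1, ?_⟩
            rintro (⟨ha, hb⟩ | ⟨ha, hb⟩)
            · exact hw2 ha
            · exact notBoth hcomp (hDlV _ hw1) (hDrV _ (hXrD _ ha))
          · rw [hf'Dl (fl v) hwnCl hwnCr hw1]
            exact h3
        · -- matched inside Gr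
          have hvnDl : v ∉ Dl := fun h => notBoth hcomp (hDlV _ h) (hDrV _ hvDr)
          have hvnXr : v ∉ Xr := fun h => hvCr (hvX.2 h)
          obtain ⟨h1, h2, h3⟩ := hfr v (Finset.mem_sdiff.mpr ⟨hvDr, hvnXr⟩)
          obtain ⟨hw1, hw2⟩ := Finset.mem_sdiff.mp h1
          have hwnCr : fr v ∉ Cr := fun h => hw2 (hCr h)
          have hwnCl : fr v ∉ Cl := fun h => notBoth hcomp (hClV _ h) (hDrV _ hw1)
          have hwnDl : fr v ∉ Dl := fun h => notBoth hcomp (hDlV _ h) (hDrV _ hw1)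
          rw [hf'Dr v hvCl hvCr hvnDl]
          refine ⟨?_, (hcomp.2.2.1 v (fr v)).mpr (Or.inr (Or.inl h2)), ?_⟩
          · simp only [Finset.mem_sdiff, Finset.mem_union]
            refine ⟨Or.inr hw1, ?_⟩
            rintro (⟨ha, hb⟩ | ⟨ha, hb⟩)
            · exact notBoth hcomp (hDlV _ (hXlD _ ha)) (hDrV _ hw1)
            · exact hw2 ha
          · rw [hf'Dr (fr v) hwnCl hwnCr hwnDl]
            exact h3


lemma minVal_attained (H : TSGraph α) : ∃ k ≤ H.TS.card, H.gamma k = H.minVal := by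
  have h : H.minVal ∈ {n | ∃ k ≤ H.TS.card, H.gamma k = n} :=
    Nat.sInf_mem ⟨H.gamma 0, 0, Nat.zero_le _, rfl⟩
  exact h

lemma disj_DlDr (hcomp : IsTrueTwin G Gl Gr) {Dl Dr : Finset α}
    (h1 : Dl ⊆ Gl.verts) (h2 : Dr ⊆ Gr.verts) : Disjoint Dl Dr :=
  Finset.disjoint_left.mpr (fun a ha hb => notBoth hcomp (h1 ha) (h2 hb))

lemma minVal_eq (hcomp : IsTrueTwin G Gl Gr) (hG : G.AllDkNonempty)
    (hGl : Gl.AllDkNonempty) (hGr : Gr.AllDkNonempty) :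
    G.minVal = Gl.minVal + Gr.minVal := by
  apply le_antisymm
  · obtain ⟨kl, hkl, hgl⟩ := minVal_attained Gl
    obtain ⟨kr, hkr, hgr⟩ := minVal_attained Gr
    obtain ⟨Dl, hDl, hDlc⟩ := gamma_attained (hGl kl hkl)
    obtain ⟨Dr, hDr, hDrc⟩ := gamma_attained (hGr kr hkr)
    have hadm : G.Adm (kl + kr - 2 * min kl kr) (Dl ∪ Dr) :=
      join hcomp hDl hDr (Nat.min_le_left _ _) (Nat.min_le_right _ _) (by omega)
    have hk0 : kl + kr - 2 * min kl kr ≤ G.TS.card := by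
      rw [TS_card_eq hcomp]; omega
    calc G.minVal ≤ G.gamma (kl + kr - 2 * min kl kr) := minVal_le_gamma hk0
      _ ≤ (Dl ∪ Dr).card := gamma_le hadm
      _ = Dl.card + Dr.card := Finset.card_union_of_disjoint (disj_DlDr hcomp hDl.1 hDr.1)
      _ = Gl.minVal + Gr.minVal := by rw [hDlc, hDrc, hgl, hgr]
  · obtain ⟨k, hk, hgk⟩ := minVal_attained G
    obtain ⟨S, hS, hScard⟩ := gamma_attained (hG k hk)
    obtain ⟨pl, pr, c, hcl, hcr, hsum, hSl, hSr⟩ := split hcomp hS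
    have e1 : Gl.minVal ≤ Gl.gamma pl := minVal_le_gamma (adm_k_le hSl)
    have e2 := gamma_le hSl
    have e3 : Gr.minVal ≤ Gr.gamma pr := minVal_le_gamma (adm_k_le hSr)
    have e4 := gamma_le hSr
    have e5 := card_split hcomp hS.1
    omega

def Cpred (Gl Gr : TSGraph α) (k : ℕ) : Prop :=
  ∃ pl pr c, c ≤ pl ∧ c ≤ pr ∧ pl + pr = k + 2 * c ∧
    (pl ≤ Gl.TS.card ∧ Gl.gamma pl = Gl.minVal) ∧ (pr ≤ Gr.TS.card ∧ Gr.gamma pr = Gr.minVal)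

lemma memC_of (hcomp : IsTrueTwin G Gl Gr) (hG : G.AllDkNonempty)
    (hGl : Gl.AllDkNonempty) (hGr : Gr.AllDkNonempty) {k : ℕ}
    (h1 : k ≤ G.TS.card) (h2 : G.gamma k = G.minVal) : Cpred Gl Gr k := by
  obtain ⟨S, hS, hScard⟩ := gamma_attained (hG k h1)
  obtain ⟨pl, pr, c, hcl, hcr, hsum, hSl, hSr⟩ := split hcomp hS
  have e1 : Gl.minVal ≤ Gl.gamma pl := minVal_le_gamma (adm_k_le hSl)
  have e2 := gamma_le hSl
  have e3 : Gr.minVal ≤ Gr.gamma pr := minVal_le_gamma (adm_k_le hSr)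
  have e4 := gamma_le hSr
  have e5 := card_split hcomp hS.1
  have e6 : S.card = Gl.minVal + Gr.minVal := by
    rw [hScard, h2, minVal_eq hcomp hG hGl hGr]
  exact ⟨pl, pr, c, hcl, hcr, hsum, ⟨adm_k_le hSl, by omega⟩, ⟨adm_k_le hSr, by omega⟩⟩

lemma gamma_le_of_memC (hcomp : IsTrueTwin G Gl Gr)
    (hGl : Gl.AllDkNonempty) (hGr : Gr.AllDkNonempty) {k : ℕ} (h : Cpred Gl Gr k) :
    G.gamma k ≤ Gl.minVal + Gr.minVal := by
  obtain ⟨pl, pr, c, hcl, hcr, hsum, ⟨hpl1, hpl2⟩, ⟨hpr1, hpr2⟩⟩ := h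
  obtain ⟨Dl, hDl, hDlc⟩ := gamma_attained (hGl pl hpl1)
  obtain ⟨Dr, hDr, hDrc⟩ := gamma_attained (hGr pr hpr1)
  calc G.gamma k ≤ (Dl ∪ Dr).card := gamma_le (join hcomp hDl hDr hcl hcr hsum)
    _ = Dl.card + Dr.card := Finset.card_union_of_disjoint (disj_DlDr hcomp hDl.1 hDr.1)
    _ = Gl.minVal + Gr.minVal := by rw [hDlc, hDrc, hpl2, hpr2]

lemma step_two (hl : Gl.Eq2Holds) (hr : Gr.Eq2Holds) {k : ℕ} (h : Cpred Gl Gr k)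
    (h2 : k + 2 ≤ Gl.betaVal + Gr.betaVal) : Cpred Gl Gr (k + 2) := by
  obtain ⟨pl, pr, c, hcl, hcr, hsum, hpl, hpr⟩ := h
  match c with
  | Nat.succ c' => exact ⟨pl, pr, c', by omega, by omega, by omega, hpl, hpr⟩
  | 0 =>
    have hsum' : pl + pr = k := by omega
    have hplb : pl ≤ Gl.betaVal := le_beta hpl.1 hpl.2
    have hprb : pr ≤ Gr.betaVal := le_beta hpr.1 hpr.2
    have hpla : Gl.alphaVal ≤ pl := alpha_le hpl.1 hpl.2
    have hpra : Gr.alphaVal ≤ pr := alpha_le hpr.1 hpr.2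
    by_cases hc1 : pl + 2 ≤ Gl.betaVal
    · obtain ⟨m, hm⟩ := even_offset hl hpl (by omega)
      have hmem := mem_aset_of_even hl (by omega) hc1 ⟨m + 1, by omega⟩
      exact ⟨pl + 2, pr, 0, Nat.zero_le _, Nat.zero_le _, by omega, hmem, hpr⟩
    · by_cases hc2 : pr + 2 ≤ Gr.betaVal
      · obtain ⟨m, hm⟩ := even_offset hr hpr (by omega)
        have hmem := mem_aset_of_even hr (by omega) hc2 ⟨m + 1, by omega⟩
        exact ⟨pl, pr + 2, 0, Nat.zero_le _, Nat.zero_le _, by omega, hpl, hmem⟩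
      · exact ⟨Gl.betaVal, Gr.betaVal, 0, Nat.zero_le _, Nat.zero_le _, by omega,
          beta_mem Gl, beta_mem Gr⟩

end Comp

end TSGraph


open TSGraph in
/-- For a true twin composition `G = Gl ⊗ Gr` with all `D_k`
families nonempty and Equation (2) holding for `Gl` and `Gr`:
`γ_{α(G)+2i}(G) = min(G)` for every `0 ≤ i ≤ (β(G) − α(G))/2`. -/
theorem stmt11 {α : Type*} [DecidableEq α] (G Gl Gr : TSGraph α)
    (hcomp : IsTrueTwin G Gl Gr)
    (hG : G.AllDkNonempty) (hGl : Gl.AllDkNonempty) (hGr : Gr.AllDkNonempty)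
    (hl : Gl.Eq2Holds) (hr : Gr.Eq2Holds) :
    ∀ i : ℕ, i ≤ (G.betaVal - G.alphaVal) / 2 →
      G.gamma (G.alphaVal + 2 * i) = G.minVal := by
  intro i hi
  have hab : G.alphaVal ≤ G.betaVal := le_beta (alpha_mem G).1 (alpha_mem G).2
  have hbb : G.betaVal ≤ Gl.betaVal + Gr.betaVal := by
    obtain ⟨pl, pr, c, hcl, hcr, hsum, hpl, hpr⟩ :=
      memC_of hcomp hG hGl hGr (beta_mem G).1 (beta_mem G).2
    have h1 := le_beta hpl.1 hpl.2
    have h2 := le_beta hpr.1 hpr.2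
    omega
  have hle : G.alphaVal + 2 * i ≤ G.betaVal := by omega
  have key : ∀ n : ℕ, G.alphaVal + 2 * n ≤ G.betaVal → Cpred Gl Gr (G.alphaVal + 2 * n) := by
    intro n
    induction n with
    | zero =>
      intro _
      have := memC_of hcomp hG hGl hGr (alpha_mem G).1 (alpha_mem G).2
      simpa using this
    | succ m ih =>
      intro h
      have hm := ih (by omega)
      have hs := step_two hl hr hm (by omega)
      have heq : G.alphaVal + 2 * (m + 1) = G.alphaVal + 2 * m + 2 := by ring
      rw [heq]
      exact hs
  have hC := key i hle
  have hup : G.gamma (G.alphaVal + 2 * i) ≤ G.minVal := by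
    rw [minVal_eq hcomp hG hGl hGr]
    exact gamma_le_of_memC hcomp hGl hGr hC
  have hdown : G.minVal ≤ G.gamma (G.alphaVal + 2 * i) :=
    minVal_le_gamma (le_trans hle (beta_mem G).1)
  omega
end

section
/- Let G = G_l ⊙ G_r be a false twin composition, let D ∈ D_k(G), and let X ⊆ D ∩ TS(G) with |X| = k be such that the subgraph of G induced by D − X has a perfect matching M. Set D_l = D ∩ V(G_l), D_r = D ∩ V(G_r), k_l = |X ∩ TS(G_l)| and k_r = |X ∩ TS(G_r)|. Then D_l ∈ D_{k_l}(G_l) and D_r ∈ D_{k_r}(G_r); moreover X ∩ TS(G_l) and X ∩ TS(G_r) are sets of unpaired vertices with respect to (D_l, M ∩ E(G_l)) and (D_r, M ∩ E(G_r)), respectively. -/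
namespace TSGraph

variable {α : Type*} [DecidableEq α]

theorem isFalseTwin_symm {G Gl Gr : TSGraph α} (h : IsFalseTwin G Gl Gr) :
    IsFalseTwin G Gr Gl := by
  obtain ⟨h1, h2, h3, h4⟩ := h
  exact ⟨h1.symm, by rw [h2, Finset.union_comm], fun u v => by rw [h3]; tauto,
    by rw [h4, Finset.union_comm]⟩

theorem stmt13_side (G Gl Gr : TSGraph α)
    (hcomp : IsFalseTwin G Gl Gr) (k : ℕ) (D X : Finset α) (f : α → α)
    (hD : G.memD k D) (hX : X ⊆ D ∩ G.TS) (hXcard : X.card = k)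
    (hf : G.IsPM (D \ X) f) :
    Gl.memD (X ∩ Gl.TS).card (D ∩ Gl.verts) ∧
    (X ∩ Gl.TS) ⊆ (D ∩ Gl.verts) ∩ Gl.TS ∧
    Gl.IsPM ((D ∩ Gl.verts) \ (X ∩ Gl.TS)) f := by
  obtain ⟨hdisj, hverts, hadj, hts⟩ := hcomp
  obtain ⟨⟨hDsub, hdom, _⟩, hmin⟩ := hD
  have hdisj' := Finset.disjoint_left.1 hdisj
  have hXD : ∀ x ∈ X, x ∈ D := fun x hx => (Finset.mem_inter.1 (hX hx)).1
  have hXTS : ∀ x ∈ X, x ∈ G.TS := fun x hx => (Finset.mem_inter.1 (hX hx)).2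
  -- X ∈ Gl.verts pieces
  have hXl : ∀ v ∈ Gl.verts, v ∈ X → v ∈ X ∩ Gl.TS := by
    intro v hvl hvX
    refine Finset.mem_inter.2 ⟨hvX, ?_⟩
    have := hXTS v hvX
    rw [hts, Finset.mem_union] at this
    rcases this with h | h
    · exact h
    · exact absurd (Gr.TS_sub h) (fun hh => hdisj' hvl hh)
  have hXr : ∀ v ∈ Gr.verts, v ∈ X → v ∈ X ∩ Gr.TS := by
    intro v hvr hvX
    refine Finset.mem_inter.2 ⟨hvX, ?_⟩
    have := hXTS v hvX
    rw [hts, Finset.mem_union] at this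
    rcases this with h | h
    · exact absurd hvr (fun hh => hdisj' (Gl.TS_sub h) hh)
    · exact h
  -- partition of X
  have hXsplit : (X ∩ Gl.TS).card + (X ∩ Gr.TS).card = k := by
    have hdisjX : Disjoint (X ∩ Gl.TS) (X ∩ Gr.TS) := by
      refine Finset.disjoint_left.2 fun a ha hb => ?_
      exact hdisj' (Gl.TS_sub (Finset.mem_inter.1 ha).2)
        (Gr.TS_sub (Finset.mem_inter.1 hb).2)
    have hXeq : (X ∩ Gl.TS) ∪ (X ∩ Gr.TS) = X := by
      rw [← Finset.inter_union_distrib_left]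
      refine Finset.inter_eq_left.2 fun x hx => ?_
      have := hXTS x hx; rw [hts] at this; exact this
    rw [← Finset.card_union_of_disjoint hdisjX, hXeq, hXcard]
  -- partition of D
  have hDsplit : (D ∩ Gl.verts).card + (D ∩ Gr.verts).card = D.card := by
    have hdisjD : Disjoint (D ∩ Gl.verts) (D ∩ Gr.verts) := by
      refine Finset.disjoint_left.2 fun a ha hb => ?_
      exact hdisj' (Finset.mem_inter.1 ha).2 (Finset.mem_inter.1 hb).2
    have hDeq : (D ∩ Gl.verts) ∪ (D ∩ Gr.verts) = D := by
      rw [← Finset.inter_union_distrib_left]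
      refine Finset.inter_eq_left.2 fun x hx => ?_
      have := hDsub hx; rw [hverts] at this; exact this
    rw [← Finset.card_union_of_disjoint hdisjD, hDeq]
  -- the perfect matching restricts
  have hXsub : (X ∩ Gl.TS) ⊆ (D ∩ Gl.verts) ∩ Gl.TS := by
    intro x hx
    rw [Finset.mem_inter] at hx ⊢
    exact ⟨Finset.mem_inter.2 ⟨hXD x hx.1, Gl.TS_sub hx.2⟩, hx.2⟩
  have hpm : Gl.IsPM ((D ∩ Gl.verts) \ (X ∩ Gl.TS)) f := by
    intro v hv
    rw [Finset.mem_sdiff, Finset.mem_inter] at hv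
    obtain ⟨⟨hvD, hvl⟩, hvX⟩ := hv
    have hvnX : v ∉ X := fun h => hvX (hXl v hvl h)
    obtain ⟨hfv, hadjv, hff⟩ := hf v (Finset.mem_sdiff.2 ⟨hvD, hvnX⟩)
    have hladj : Gl.Adj v (f v) := by
      rcases (hadj v (f v)).1 hadjv with h | h
      · exact h
      · exact absurd (Gr.adj_mem _ _ h).1 (fun hh => hdisj' hvl hh)
    have hfvl : f v ∈ Gl.verts := (Gl.adj_mem _ _ hladj).2
    rw [Finset.mem_sdiff] at hfv
    refine ⟨Finset.mem_sdiff.2 ⟨Finset.mem_inter.2 ⟨hfv.1, hfvl⟩, ?_⟩, hladj, hff⟩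
    exact fun h => hfv.2 (Finset.mem_inter.1 h).1
  -- admissibility
  have hadm : Gl.Adm (X ∩ Gl.TS).card (D ∩ Gl.verts) := by
    refine ⟨Finset.inter_subset_right, ?_, X ∩ Gl.TS, hXsub, rfl, f, hpm⟩
    intro v hvl hvts
    have hvG : v ∈ G.verts := by rw [hverts]; exact Finset.mem_union_left _ hvl
    have hvnTS : v ∉ G.TS := by
      rw [hts]
      intro h
      rcases Finset.mem_union.1 h with h | h
      · exact hvts h
      · exact hdisj' hvl (Gr.TS_sub h)
    rcases hdom v hvG hvnTS with h | ⟨u, hu, huv⟩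
    · exact Or.inl (Finset.mem_inter.2 ⟨h, hvl⟩)
    · rcases (hadj u v).1 huv with h | h
      · exact Or.inr ⟨u, Finset.mem_inter.2 ⟨hu, (Gl.adj_mem _ _ h).1⟩, h⟩
      · exact absurd (Gr.adj_mem _ _ h).2 (fun hh => hdisj' hvl hh)
  -- minimality
  refine ⟨⟨hadm, ?_⟩, hXsub, hpm⟩
  intro S' hS'
  obtain ⟨hS'sub, hS'dom, X', hX', hX'card, g, hg⟩ := hS'
  have hX'l : X' ⊆ Gl.verts := fun x hx => Gl.TS_sub (Finset.mem_inter.1 (hX' hx)).2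
  set S : Finset α := S' ∪ (D ∩ Gr.verts) with hS
  have hdisjS : Disjoint S' (D ∩ Gr.verts) := by
    refine Finset.disjoint_left.2 fun a ha hb => ?_
    exact hdisj' (hS'sub ha) (Finset.mem_inter.1 hb).2
  set X'' : Finset α := X' ∪ (X ∩ Gr.TS) with hX''
  have hX''sub : X'' ⊆ S ∩ G.TS := by
    intro x hx
    rcases Finset.mem_union.1 hx with h | h
    · refine Finset.mem_inter.2 ⟨Finset.mem_union_left _ (Finset.mem_inter.1 (hX' h)).1, ?_⟩
      rw [hts]; exact Finset.mem_union_left _ (Finset.mem_inter.1 (hX' h)).2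
    · obtain ⟨h1, h2⟩ := Finset.mem_inter.1 h
      refine Finset.mem_inter.2 ⟨Finset.mem_union_right _
        (Finset.mem_inter.2 ⟨hXD x h1, Gr.TS_sub h2⟩), ?_⟩
      rw [hts]; exact Finset.mem_union_right _ h2
  have hX''card : X''.card = k := by
    have hdx : Disjoint X' (X ∩ Gr.TS) := by
      refine Finset.disjoint_left.2 fun a ha hb => ?_
      exact hdisj' (hX'l ha) (Gr.TS_sub (Finset.mem_inter.1 hb).2)
    rw [hX'', Finset.card_union_of_disjoint hdx, hX'card, hXsplit]
  -- matching on S \ X''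
  have hpmS : G.IsPM (S \ X'') (fun v => if v ∈ Gl.verts then g v else f v) := by
    intro v hv
    rw [Finset.mem_sdiff] at hv
    obtain ⟨hvS, hvX''⟩ := hv
    rcases Finset.mem_union.1 hvS with hvS' | hvDr
    · have hvl : v ∈ Gl.verts := hS'sub hvS'
      have hvnX' : v ∉ X' := fun h => hvX'' (Finset.mem_union_left _ h)
      obtain ⟨hgv, hgadj, hgg⟩ := hg v (Finset.mem_sdiff.2 ⟨hvS', hvnX'⟩)
      rw [Finset.mem_sdiff] at hgv
      have hgvl : g v ∈ Gl.verts := hS'sub hgv.1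
      simp only [if_pos hvl, if_pos hgvl]
      refine ⟨Finset.mem_sdiff.2 ⟨Finset.mem_union_left _ hgv.1, ?_⟩,
        (hadj v (g v)).2 (Or.inl hgadj), hgg⟩
      intro h
      rcases Finset.mem_union.1 h with h | h
      · exact hgv.2 h
      · exact hdisj' hgvl (Gr.TS_sub (Finset.mem_inter.1 h).2)
    · obtain ⟨hvD, hvr⟩ := Finset.mem_inter.1 hvDr
      have hvnl : v ∉ Gl.verts := fun h => hdisj' h hvr
      have hvnX : v ∉ X := fun h => hvX'' (Finset.mem_union_right _ (hXr v hvr h))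
      obtain ⟨hfv, hfadj, hff⟩ := hf v (Finset.mem_sdiff.2 ⟨hvD, hvnX⟩)
      rw [Finset.mem_sdiff] at hfv
      have hradj : Gr.Adj v (f v) := by
        rcases (hadj v (f v)).1 hfadj with h | h
        · exact absurd (Gl.adj_mem _ _ h).1 hvnl
        · exact h
      have hfvr : f v ∈ Gr.verts := (Gr.adj_mem _ _ hradj).2
      have hfvnl : f v ∉ Gl.verts := fun h => hdisj' h hfvr
      simp only [if_neg hvnl, if_neg hfvnl]
      refine ⟨Finset.mem_sdiff.2 ⟨Finset.mem_union_right _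
        (Finset.mem_inter.2 ⟨hfv.1, hfvr⟩), ?_⟩, hfadj, hff⟩
      intro h
      rcases Finset.mem_union.1 h with h | h
      · exact hfvnl (hX'l h)
      · exact hfv.2 (Finset.mem_inter.1 h).1
  -- S is admissible for G with parameter k
  have hadmS : G.Adm k S := by
    refine ⟨?_, ?_, X'', hX''sub, hX''card, _, hpmS⟩
    · intro x hx
      rw [hverts]
      rcases Finset.mem_union.1 hx with h | h
      · exact Finset.mem_union_left _ (hS'sub h)
      · exact Finset.mem_union_right _ (Finset.mem_inter.1 h).2
    · intro v hvG hvnTS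
      rw [hverts, Finset.mem_union] at hvG
      rcases hvG with hvl | hvr
      · have hvnl : v ∉ Gl.TS := fun h => hvnTS (by rw [hts]; exact Finset.mem_union_left _ h)
        rcases hS'dom v hvl hvnl with h | ⟨u, hu, huv⟩
        · exact Or.inl (Finset.mem_union_left _ h)
        · exact Or.inr ⟨u, Finset.mem_union_left _ hu, (hadj u v).2 (Or.inl huv)⟩
      · have hvnr : v ∉ G.TS := hvnTS
        rcases hdom v (by rw [hverts]; exact Finset.mem_union_right _ hvr) hvnr with h | ⟨u, hu, huv⟩
        · exact Or.inl (Finset.mem_union_right _ (Finset.mem_inter.2 ⟨h, hvr⟩))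
        · rcases (hadj u v).1 huv with h | h
          · exact absurd (Gl.adj_mem _ _ h).2 (fun hh => hdisj' hh hvr)
          · exact Or.inr ⟨u, Finset.mem_union_right _
              (Finset.mem_inter.2 ⟨hu, (Gr.adj_mem _ _ h).1⟩), (hadj u v).2 (Or.inr h)⟩
  have hDS := hmin S hadmS
  have hScard : S.card = S'.card + (D ∩ Gr.verts).card :=
    Finset.card_union_of_disjoint hdisjS
  omega

end TSGraph

open TSGraph in
/-- For a false twin composition `G = Gl ⊙ Gr`, `D ∈ D_k(G)` with
unpaired set `X` and perfect matching `M` (encoded by the involution `f`) of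
`G[D − X]`: `D_l ∈ D_{k_l}(Gl)` and `D_r ∈ D_{k_r}(Gr)`, and `X ∩ TS(Gl)`,
`X ∩ TS(Gr)` are sets of unpaired vertices with respect to `(D_l, M ∩ E(Gl))`
and `(D_r, M ∩ E(Gr))`, respectively. -/
theorem stmt13 {α : Type*} [DecidableEq α] (G Gl Gr : TSGraph α)
    (hcomp : IsFalseTwin G Gl Gr) (k : ℕ) (D X : Finset α) (f : α → α)
    (hD : G.memD k D) (hX : X ⊆ D ∩ G.TS) (hXcard : X.card = k)
    (hf : G.IsPM (D \ X) f) :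
    Gl.memD (X ∩ Gl.TS).card (D ∩ Gl.verts) ∧
    Gr.memD (X ∩ Gr.TS).card (D ∩ Gr.verts) ∧
    (X ∩ Gl.TS) ⊆ (D ∩ Gl.verts) ∩ Gl.TS ∧
    Gl.IsPM ((D ∩ Gl.verts) \ (X ∩ Gl.TS)) f ∧
    (X ∩ Gr.TS) ⊆ (D ∩ Gr.verts) ∩ Gr.TS ∧
    Gr.IsPM ((D ∩ Gr.verts) \ (X ∩ Gr.TS)) f := by
  obtain ⟨hl1, hl2, hl3⟩ := TSGraph.stmt13_side G Gl Gr hcomp k D X f hD hX hXcard hf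
  obtain ⟨hr1, hr2, hr3⟩ := TSGraph.stmt13_side G Gr Gl (TSGraph.isFalseTwin_symm hcomp) k D X f hD hX hXcard hf
  exact ⟨hl1, hr1, hl2, hl3, hr2, hr3⟩
end

section
/- Let G = G_l ⊙ G_r be a false twin composition, and assume D_k(H) ≠ ∅ for each H ∈ {G, G_l, G_r} and each 0 ≤ k ≤ |TS(H)|. Then min(G) = min(G_l) + min(G_r), α(G) = α(G_l) + α(G_r), and β(G) = β(G_l) + β(G_r). -/
section Stmt14Aux

open TSGraph

variable {α : Type*} [DecidableEq α]

lemma aux_gamma_le (G : TSGraph α) {k : ℕ} {S : Finset α} (h : G.Adm k S) :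
    G.gamma k ≤ S.card := by
  unfold TSGraph.gamma
  exact Nat.sInf_le ⟨S, h, rfl⟩

lemma aux_gamma_attained (G : TSGraph α) {k : ℕ} (h : G.DkNonempty k) :
    ∃ S, G.Adm k S ∧ S.card = G.gamma k := by
  obtain ⟨S, hS, hmin⟩ := h
  refine ⟨S, hS, le_antisymm ?_ (aux_gamma_le G hS)⟩
  have hne : {n | ∃ T, G.Adm k T ∧ T.card = n}.Nonempty := ⟨S.card, S, hS, rfl⟩
  obtain ⟨S', hS', hcard⟩ := Nat.sInf_mem hne
  calc S.card ≤ S'.card := hmin S' hS'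
    _ = G.gamma k := hcard

lemma aux_minVal_le (G : TSGraph α) {k : ℕ} (hk : k ≤ G.TS.card) :
    G.minVal ≤ G.gamma k := by
  unfold TSGraph.minVal
  exact Nat.sInf_le ⟨k, hk, rfl⟩

lemma aux_minVal_attained (G : TSGraph α) :
    ∃ k, k ≤ G.TS.card ∧ G.gamma k = G.minVal := by
  have hne : {n | ∃ k ≤ G.TS.card, G.gamma k = n}.Nonempty :=
    ⟨G.gamma 0, 0, Nat.zero_le _, rfl⟩
  obtain ⟨k, hk, h⟩ := Nat.sInf_mem hne
  exact ⟨k, hk, h⟩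

lemma aux_ftwin_symm {G Gl Gr : TSGraph α} (h : IsFalseTwin G Gl Gr) :
    IsFalseTwin G Gr Gl := by
  obtain ⟨h1, h2, h3, h4⟩ := h
  refine ⟨h1.symm, by rw [h2, Finset.union_comm], fun u v => by rw [h3]; tauto,
    by rw [h4, Finset.union_comm]⟩

lemma aux_card_split {Vl Vr : Finset α} (hdisj : Disjoint Vl Vr) {S : Finset α}
    (hS : S ⊆ Vl ∪ Vr) : S.card = (S ∩ Vl).card + (S ∩ Vr).card := by
  have h1 : S ∩ Vl ∪ S ∩ Vr = S := by
    rw [← Finset.inter_union_distrib_left]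
    exact Finset.inter_eq_left.mpr hS
  have h2 : Disjoint (S ∩ Vl) (S ∩ Vr) :=
    hdisj.mono Finset.inter_subset_right Finset.inter_subset_right
  calc S.card = (S ∩ Vl ∪ S ∩ Vr).card := by rw [h1]
    _ = (S ∩ Vl).card + (S ∩ Vr).card := Finset.card_union_of_disjoint h2

/-- One-sided extraction of an admissible structure from an admissible set of `G`. -/
lemma aux_adm_half {G Gl Gr : TSGraph α} (hcomp : IsFalseTwin G Gl Gr)
    {S : Finset α} (_hsub : S ⊆ G.verts)
    (hdom : ∀ v ∈ G.verts, v ∉ G.TS → v ∈ S ∨ ∃ u ∈ S, G.Adj u v)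
    {X : Finset α} (hX : X ⊆ S ∩ G.TS) {f : α → α} (hf : G.IsPM (S \ X) f) :
    (X ∩ Gl.verts) ⊆ Gl.TS ∧ Gl.Adm (X ∩ Gl.verts).card (S ∩ Gl.verts) := by
  obtain ⟨hdisj, hV, hA, hT⟩ := hcomp
  have hnotr : ∀ x ∈ Gl.verts, x ∉ Gr.verts := fun x hx => Finset.disjoint_left.mp hdisj hx
  have hXTSl : (X ∩ Gl.verts) ⊆ Gl.TS := by
    intro x hx
    obtain ⟨hxX, hxl⟩ := Finset.mem_inter.mp hx
    have := (Finset.mem_inter.mp (hX hxX)).2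
    rw [hT] at this
    rcases Finset.mem_union.mp this with h1 | h1
    · exact h1
    · exact absurd (Gr.TS_sub h1) (hnotr x hxl)
  refine ⟨hXTSl, Finset.inter_subset_right, ?_, X ∩ Gl.verts, ?_, rfl, f, ?_⟩
  · -- domination
    intro v hv hvTS
    have hvG : v ∈ G.verts := by rw [hV]; exact Finset.mem_union_left _ hv
    have hvTSG : v ∉ G.TS := by
      rw [hT]
      intro hcon
      rcases Finset.mem_union.mp hcon with h1 | h1
      · exact hvTS h1
      · exact hnotr v hv (Gr.TS_sub h1)
    rcases hdom v hvG hvTSG with hvS | ⟨u, huS, hadj⟩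
    · exact Or.inl (Finset.mem_inter.mpr ⟨hvS, hv⟩)
    · rcases (hA u v).mp hadj with h1 | h1
      · exact Or.inr ⟨u, Finset.mem_inter.mpr ⟨huS, (Gl.adj_mem u v h1).1⟩, h1⟩
      · exact absurd (Gr.adj_mem u v h1).2 (hnotr v hv)
  · -- X ∩ Gl.verts ⊆ (S ∩ Gl.verts) ∩ Gl.TS
    intro x hx
    obtain ⟨hxX, hxl⟩ := Finset.mem_inter.mp hx
    exact Finset.mem_inter.mpr ⟨Finset.mem_inter.mpr
      ⟨(Finset.mem_inter.mp (hX hxX)).1, hxl⟩, hXTSl hx⟩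
  · -- perfect matching
    intro v hv
    obtain ⟨hvSl, hvX⟩ := Finset.mem_sdiff.mp hv
    obtain ⟨hvS, hvl⟩ := Finset.mem_inter.mp hvSl
    have hvSX : v ∈ S \ X := by
      refine Finset.mem_sdiff.mpr ⟨hvS, fun hc => hvX (Finset.mem_inter.mpr ⟨hc, hvl⟩)⟩
    obtain ⟨hfv, hadj, hff⟩ := hf v hvSX
    have hadjl : Gl.Adj v (f v) := by
      rcases (hA v (f v)).mp hadj with h1 | h1
      · exact h1
      · exact absurd (Gr.adj_mem v (f v) h1).1 (hnotr v hvl)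
    have hfvl : f v ∈ Gl.verts := (Gl.adj_mem v (f v) hadjl).2
    obtain ⟨hfvS, hfvX⟩ := Finset.mem_sdiff.mp hfv
    refine ⟨Finset.mem_sdiff.mpr ⟨Finset.mem_inter.mpr ⟨hfvS, hfvl⟩, ?_⟩, hadjl, hff⟩
    intro hc
    exact hfvX (Finset.mem_inter.mp hc).1

/-- Decomposition of an admissible set of `G` into admissible sets of `Gl`, `Gr`. -/
lemma aux_adm_split {G Gl Gr : TSGraph α} (hcomp : IsFalseTwin G Gl Gr)
    {k : ℕ} {S : Finset α} (h : G.Adm k S) :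
    ∃ kl kr, kl + kr = k ∧ kl ≤ Gl.TS.card ∧ kr ≤ Gr.TS.card ∧
      Gl.Adm kl (S ∩ Gl.verts) ∧ Gr.Adm kr (S ∩ Gr.verts) ∧
      S.card = (S ∩ Gl.verts).card + (S ∩ Gr.verts).card := by
  obtain ⟨hsub, hdom, X, hX, hXc, f, hf⟩ := h
  obtain ⟨hTSl, hadml⟩ := aux_adm_half hcomp hsub hdom hX hf
  obtain ⟨hTSr, hadmr⟩ := aux_adm_half (aux_ftwin_symm hcomp) hsub hdom hX hf
  obtain ⟨hdisj, hV, hA, hT⟩ := hcomp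
  have hXsub : X ⊆ Gl.verts ∪ Gr.verts := by
    intro x hx
    have := (Finset.mem_inter.mp (hX hx)).2
    rw [hT] at this
    rcases Finset.mem_union.mp this with h1 | h1
    · exact Finset.mem_union_left _ (Gl.TS_sub h1)
    · exact Finset.mem_union_right _ (Gr.TS_sub h1)
  refine ⟨(X ∩ Gl.verts).card, (X ∩ Gr.verts).card, ?_,
    Finset.card_le_card hTSl, Finset.card_le_card hTSr, hadml, hadmr, ?_⟩
  · rw [← aux_card_split hdisj hXsub, hXc]
  · exact aux_card_split hdisj (hV ▸ hsub)

/-- Combining admissible sets of `Gl`, `Gr` into an admissible set of `G`. -/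
lemma aux_adm_join {G Gl Gr : TSGraph α} (hcomp : IsFalseTwin G Gl Gr)
    {kl kr : ℕ} {Sl Sr : Finset α} (hl : Gl.Adm kl Sl) (hr : Gr.Adm kr Sr) :
    G.Adm (kl + kr) (Sl ∪ Sr) ∧ (Sl ∪ Sr).card = Sl.card + Sr.card := by
  obtain ⟨hdisj, hV, hA, hT⟩ := hcomp
  obtain ⟨hsubl, hdoml, Xl, hXl, hXlc, fl, hfl⟩ := hl
  obtain ⟨hsubr, hdomr, Xr, hXr, hXrc, fr, hfr⟩ := hr
  have hnotr : ∀ x ∈ Gl.verts, x ∉ Gr.verts := fun x hx => Finset.disjoint_left.mp hdisj hx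
  have hnotl : ∀ x ∈ Gr.verts, x ∉ Gl.verts := fun x hx => Finset.disjoint_right.mp hdisj hx
  have hSd : Disjoint Sl Sr := hdisj.mono hsubl hsubr
  have hXlv : Xl ⊆ Gl.verts := fun x hx => hsubl (Finset.mem_inter.mp (hXl hx)).1
  have hXrv : Xr ⊆ Gr.verts := fun x hx => hsubr (Finset.mem_inter.mp (hXr hx)).1
  have hXd : Disjoint Xl Xr := hdisj.mono hXlv hXrv
  constructor
  · refine ⟨by rw [hV]; exact Finset.union_subset_union hsubl hsubr, ?_, Xl ∪ Xr, ?_, ?_, ?_⟩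
    · -- domination
      intro v hv hvTS
      rw [hV] at hv
      rw [hT] at hvTS
      rcases Finset.mem_union.mp hv with hvl | hvr
      · have : v ∉ Gl.TS := fun hc => hvTS (Finset.mem_union_left _ hc)
        rcases hdoml v hvl this with h1 | ⟨u, huS, hadj⟩
        · exact Or.inl (Finset.mem_union_left _ h1)
        · exact Or.inr ⟨u, Finset.mem_union_left _ huS, (hA u v).mpr (Or.inl hadj)⟩
      · have : v ∉ Gr.TS := fun hc => hvTS (Finset.mem_union_right _ hc)
        rcases hdomr v hvr this with h1 | ⟨u, huS, hadj⟩
        · exact Or.inl (Finset.mem_union_right _ h1)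
        · exact Or.inr ⟨u, Finset.mem_union_right _ huS, (hA u v).mpr (Or.inr hadj)⟩
    · -- Xl ∪ Xr ⊆ (Sl ∪ Sr) ∩ G.TS
      intro x hx
      rw [hT]
      rcases Finset.mem_union.mp hx with h1 | h1
      · obtain ⟨h2, h3⟩ := Finset.mem_inter.mp (hXl h1)
        exact Finset.mem_inter.mpr ⟨Finset.mem_union_left _ h2, Finset.mem_union_left _ h3⟩
      · obtain ⟨h2, h3⟩ := Finset.mem_inter.mp (hXr h1)
        exact Finset.mem_inter.mpr ⟨Finset.mem_union_right _ h2, Finset.mem_union_right _ h3⟩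
    · rw [Finset.card_union_of_disjoint hXd, hXlc, hXrc]
    · -- perfect matching
      refine ⟨fun v => if v ∈ Sl \ Xl then fl v else fr v, ?_⟩
      intro v hv
      obtain ⟨hvS, hvX⟩ := Finset.mem_sdiff.mp hv
      by_cases hcase : v ∈ Sl \ Xl
      · obtain ⟨hfv, hadj, hff⟩ := hfl v hcase
        obtain ⟨hfvS, hfvX⟩ := Finset.mem_sdiff.mp hfv
        have hfvVl : fl v ∈ Gl.verts := hsubl hfvS
        simp only [if_pos hcase, if_pos hfv]
        refine ⟨Finset.mem_sdiff.mpr ⟨Finset.mem_union_left _ hfvS, ?_⟩,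
          (hA v (fl v)).mpr (Or.inl hadj), hff⟩
        intro hc
        rcases Finset.mem_union.mp hc with h1 | h1
        · exact hfvX h1
        · exact hnotr _ hfvVl (hXrv h1)
      · have hvSr : v ∈ Sr := by
          rcases Finset.mem_union.mp hvS with h1 | h1
          · exact absurd (Finset.mem_sdiff.mpr
              ⟨h1, fun hc => hvX (Finset.mem_union_left _ hc)⟩) hcase
          · exact h1
        have hvXr : v ∉ Xr := fun hc => hvX (Finset.mem_union_right _ hc)
        obtain ⟨hfv, hadj, hff⟩ := hfr v (Finset.mem_sdiff.mpr ⟨hvSr, hvXr⟩)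
        obtain ⟨hfvS, hfvX⟩ := Finset.mem_sdiff.mp hfv
        have hfvVr : fr v ∈ Gr.verts := hsubr hfvS
        have hfvnot : fr v ∉ Sl \ Xl := fun hc =>
          hnotl _ hfvVr (hsubl (Finset.mem_sdiff.mp hc).1)
        simp only [if_neg hcase, if_neg hfvnot]
        refine ⟨Finset.mem_sdiff.mpr ⟨Finset.mem_union_right _ hfvS, ?_⟩,
          (hA v (fr v)).mpr (Or.inr hadj), hff⟩
        intro hc
        rcases Finset.mem_union.mp hc with h1 | h1
        · exact hnotl _ hfvVr (hXlv h1)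
        · exact hfvX h1
  · exact Finset.card_union_of_disjoint hSd

end Stmt14Aux

open TSGraph in
/-- For a false twin composition `G = Gl ⊙ Gr` with all `D_k`
families nonempty, `min(G) = min(Gl) + min(Gr)`, `α(G) = α(Gl) + α(Gr)`, and
`β(G) = β(Gl) + β(Gr)`. -/
theorem stmt14 {α : Type*} [DecidableEq α] (G Gl Gr : TSGraph α)
    (hcomp : IsFalseTwin G Gl Gr)
    (hG : G.AllDkNonempty) (hGl : Gl.AllDkNonempty) (hGr : Gr.AllDkNonempty) :
    G.minVal = Gl.minVal + Gr.minVal ∧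
    G.alphaVal = Gl.alphaVal + Gr.alphaVal ∧
    G.betaVal = Gl.betaVal + Gr.betaVal := by
  have hcomp' := hcomp
  obtain ⟨hdisj, hV, hA, hT⟩ := hcomp'
  have hTd : Disjoint Gl.TS Gr.TS := hdisj.mono Gl.TS_sub Gr.TS_sub
  have hcard : G.TS.card = Gl.TS.card + Gr.TS.card := by
    rw [hT, Finset.card_union_of_disjoint hTd]
  have L1 : ∀ k, k ≤ G.TS.card → ∃ kl kr, kl + kr = k ∧ kl ≤ Gl.TS.card ∧
      kr ≤ Gr.TS.card ∧ Gl.gamma kl + Gr.gamma kr ≤ G.gamma k := by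
    intro k hk
    obtain ⟨S, hS, hSc⟩ := aux_gamma_attained G (hG k hk)
    obtain ⟨kl, kr, hsum, hkl, hkr, hadml, hadmr, hc⟩ := aux_adm_split hcomp hS
    refine ⟨kl, kr, hsum, hkl, hkr, ?_⟩
    calc Gl.gamma kl + Gr.gamma kr ≤ (S ∩ Gl.verts).card + (S ∩ Gr.verts).card :=
        Nat.add_le_add (aux_gamma_le Gl hadml) (aux_gamma_le Gr hadmr)
      _ = S.card := hc.symm
      _ = G.gamma k := hSc
  have L2 : ∀ kl kr, kl ≤ Gl.TS.card → kr ≤ Gr.TS.card →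
      G.gamma (kl + kr) ≤ Gl.gamma kl + Gr.gamma kr := by
    intro kl kr hkl hkr
    obtain ⟨Sl, hSl, hSlc⟩ := aux_gamma_attained Gl (hGl kl hkl)
    obtain ⟨Sr, hSr, hSrc⟩ := aux_gamma_attained Gr (hGr kr hkr)
    obtain ⟨hadm, hc⟩ := aux_adm_join hcomp hSl hSr
    calc G.gamma (kl + kr) ≤ (Sl ∪ Sr).card := aux_gamma_le G hadm
      _ = Sl.card + Sr.card := hc
      _ = Gl.gamma kl + Gr.gamma kr := by rw [hSlc, hSrc]
  have hmin : G.minVal = Gl.minVal + Gr.minVal := by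
    apply le_antisymm
    · obtain ⟨al, hal, hgal⟩ := aux_minVal_attained Gl
      obtain ⟨ar, har, hgar⟩ := aux_minVal_attained Gr
      have h1 : al + ar ≤ G.TS.card := by omega
      calc G.minVal ≤ G.gamma (al + ar) := aux_minVal_le G h1
        _ ≤ Gl.gamma al + Gr.gamma ar := L2 al ar hal har
        _ = Gl.minVal + Gr.minVal := by rw [hgal, hgar]
    · obtain ⟨k, hk, hgk⟩ := aux_minVal_attained G
      obtain ⟨kl, kr, hsum, hkl, hkr, hle⟩ := L1 k hk
      have h1 := aux_minVal_le Gl hkl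
      have h2 := aux_minVal_le Gr hkr
      omega
  have hset : {k | k ≤ G.TS.card ∧ G.gamma k = G.minVal} =
      {k | ∃ a, (a ≤ Gl.TS.card ∧ Gl.gamma a = Gl.minVal) ∧
        ∃ b, (b ≤ Gr.TS.card ∧ Gr.gamma b = Gr.minVal) ∧ a + b = k} := by
    ext k
    simp only [Set.mem_setOf_eq]
    constructor
    · rintro ⟨hk, hgk⟩
      obtain ⟨kl, kr, hsum, hkl, hkr, hle⟩ := L1 k hk
      have h1 := aux_minVal_le Gl hkl
      have h2 := aux_minVal_le Gr hkr
      exact ⟨kl, ⟨hkl, by omega⟩, kr, ⟨hkr, by omega⟩, hsum⟩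
    · rintro ⟨a, ⟨ha, hga⟩, b, ⟨hb, hgb⟩, rfl⟩
      refine ⟨by omega, le_antisymm ?_ (aux_minVal_le G (by omega))⟩
      calc G.gamma (a + b) ≤ Gl.gamma a + Gr.gamma b := L2 a b ha hb
        _ = G.minVal := by rw [hga, hgb, hmin]
  have hAne : ({k | k ≤ Gl.TS.card ∧ Gl.gamma k = Gl.minVal} : Set ℕ).Nonempty := by
    obtain ⟨a, ha, hg⟩ := aux_minVal_attained Gl
    exact ⟨a, ha, hg⟩
  have hBne : ({k | k ≤ Gr.TS.card ∧ Gr.gamma k = Gr.minVal} : Set ℕ).Nonempty := by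
    obtain ⟨b, hb, hg⟩ := aux_minVal_attained Gr
    exact ⟨b, hb, hg⟩
  have hSne : ({k | k ≤ G.TS.card ∧ G.gamma k = G.minVal} : Set ℕ).Nonempty := by
    rw [hset]
    obtain ⟨a, ha⟩ := hAne
    obtain ⟨b, hb⟩ := hBne
    exact ⟨a + b, a, ha, b, hb, rfl⟩
  have hAbdd : BddAbove {k | k ≤ Gl.TS.card ∧ Gl.gamma k = Gl.minVal} :=
    ⟨Gl.TS.card, fun x hx => hx.1⟩
  have hBbdd : BddAbove {k | k ≤ Gr.TS.card ∧ Gr.gamma k = Gr.minVal} :=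
    ⟨Gr.TS.card, fun x hx => hx.1⟩
  have hSbdd : BddAbove {k | k ≤ G.TS.card ∧ G.gamma k = G.minVal} :=
    ⟨G.TS.card, fun x hx => hx.1⟩
  have halpha : G.alphaVal = Gl.alphaVal + Gr.alphaVal := by
    have ha0 := Nat.sInf_mem hAne
    have hb0 := Nat.sInf_mem hBne
    unfold TSGraph.alphaVal
    apply le_antisymm
    · apply Nat.sInf_le
      rw [hset]
      exact ⟨_, ha0, _, hb0, rfl⟩
    · rw [hset]
      have hs := Nat.sInf_mem hSne
      rw [hset] at hs
      obtain ⟨a, ha, b, hb, heq⟩ := hs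
      have h1 := Nat.sInf_le
        (show a ∈ {k | k ≤ Gl.TS.card ∧ Gl.gamma k = Gl.minVal} from ha)
      have h2 := Nat.sInf_le
        (show b ∈ {k | k ≤ Gr.TS.card ∧ Gr.gamma k = Gr.minVal} from hb)
      omega
  have hbeta : G.betaVal = Gl.betaVal + Gr.betaVal := by
    have ha1 := Nat.sSup_mem hAne hAbdd
    have hb1 := Nat.sSup_mem hBne hBbdd
    unfold TSGraph.betaVal
    apply le_antisymm
    · rw [hset]
      have hs := Nat.sSup_mem hSne hSbdd
      rw [hset] at hs
      obtain ⟨a, ha, b, hb, heq⟩ := hs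
      have h1 := le_csSup hAbdd
        (show a ∈ {k | k ≤ Gl.TS.card ∧ Gl.gamma k = Gl.minVal} from ha)
      have h2 := le_csSup hBbdd
        (show b ∈ {k | k ≤ Gr.TS.card ∧ Gr.gamma k = Gr.minVal} from hb)
      omega
    · apply le_csSup hSbdd
      rw [hset]
      exact ⟨_, ha1, _, hb1, rfl⟩
  exact ⟨hmin, halpha, hbeta⟩
end

section
/- Let G = G_l ⊙ G_r be a false twin composition, and assume D_k(H) ≠ ∅ for each H ∈ {G, G_l, G_r} and each 0 ≤ k ≤ |TS(H)|. If Equation (2) holds for G_l and for G_r, then Equation (2) holds for G. -/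
namespace TSGraph

variable {α : Type*} [DecidableEq α]

/-! ### Auxiliary material for `stmt15` -/

def myPhi15 (a b k : ℕ) : ℕ := if k < a then a - k else if k ≤ b then (k - a) % 2 else k - b

lemma myPhi15_lb {al bl ar br k1 k2 : ℕ} (h1 : al ≤ bl) (h2 : ar ≤ br)
    (e1 : (bl - al) % 2 = 0) (e2 : (br - ar) % 2 = 0) :
    myPhi15 (al + ar) (bl + br) (k1 + k2) ≤ myPhi15 al bl k1 + myPhi15 ar br k2 := by
  unfold myPhi15; split_ifs <;> omega

lemma myPhi15_ub {al bl tl ar br tr k : ℕ} (hab1 : al ≤ bl) (hbt1 : bl ≤ tl)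
    (hab2 : ar ≤ br) (hbt2 : br ≤ tr)
    (e1 : (bl - al) % 2 = 0) (e2 : (br - ar) % 2 = 0) (hk : k ≤ tl + tr) :
    ∃ k1 k2, k1 + k2 = k ∧ k1 ≤ tl ∧ k2 ≤ tr ∧
      myPhi15 al bl k1 + myPhi15 ar br k2 = myPhi15 (al + ar) (bl + br) k := by
  rcases le_or_gt k al with h | h
  · exact ⟨k, 0, by omega, by omega, by omega, by unfold myPhi15; split_ifs <;> omega⟩
  rcases le_or_gt k (al + ar) with h' | h'
  · exact ⟨al, k - al, by omega, by omega, by omega, by unfold myPhi15; split_ifs <;> omega⟩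
  rcases le_or_gt k (bl + br) with h'' | h''
  · by_cases hcase : (max al (k - br) - al) % 2 = 1 ∧ (k - (al + ar)) % 2 = 0
    · exact ⟨max al (k - br) + 1, k - (max al (k - br)) - 1, by omega, by omega, by omega,
        by unfold myPhi15; split_ifs <;> omega⟩
    · exact ⟨max al (k - br), k - max al (k - br), by omega, by omega, by omega,
        by unfold myPhi15; split_ifs <;> omega⟩
  · exact ⟨max bl (k - tr), k - max bl (k - tr), by omega, by omega, by omega,
      by unfold myPhi15; split_ifs <;> omega⟩

lemma even_card_of_inv15 {T : Finset α} {f : α → α}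
    (h : ∀ v ∈ T, f v ∈ T ∧ f v ≠ v ∧ f (f v) = v) : Even T.card := by
  classical
  suffices H : ∀ n (T : Finset α), (∀ v ∈ T, f v ∈ T ∧ f v ≠ v ∧ f (f v) = v) →
      T.card = n → Even T.card from H T.card T h rfl
  clear h T
  intro n
  induction n using Nat.strong_induction_on with
  | _ n ih =>
  intro T h hn
  rcases T.eq_empty_or_nonempty with rfl | ⟨v, hv⟩
  · simp [← hn]
  · obtain ⟨hfv, hne, hff⟩ := h v hv
    have hsub : ({v, f v} : Finset α) ⊆ T := by
      intro x hx
      simp only [Finset.mem_insert, Finset.mem_singleton] at hx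
      rcases hx with rfl | rfl <;> assumption
    have hc2 : ({v, f v} : Finset α).card = 2 := Finset.card_pair (Ne.symm hne)
    have hcard : (T \ {v, f v}).card = T.card - 2 := by
      rw [Finset.card_sdiff_of_subset hsub, hc2]
    have hT2 : 2 ≤ T.card := hc2 ▸ Finset.card_le_card hsub
    have h' : ∀ u ∈ T \ ({v, f v} : Finset α), f u ∈ T \ ({v, f v} : Finset α) ∧ f u ≠ u ∧ f (f u) = u := by
      intro u hu
      rw [Finset.mem_sdiff] at hu
      obtain ⟨huT, hunm⟩ := hu
      simp only [Finset.mem_insert, Finset.mem_singleton, not_or] at hunm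
      obtain ⟨hfu, hfne, hffu⟩ := h u huT
      refine ⟨?_, hfne, hffu⟩
      rw [Finset.mem_sdiff]
      refine ⟨hfu, ?_⟩
      simp only [Finset.mem_insert, Finset.mem_singleton, not_or]
      constructor
      · intro he; apply hunm.2; rw [← he, hffu]
      · intro he; apply hunm.1
        have := congrArg f he
        rwa [hffu, hff] at this
    have := ih (n - 2) (by omega) (T \ {v, f v}) h' (by omega)
    rw [Nat.even_iff] at this ⊢
    omega

lemma gamma_min15 {H : TSGraph α} {k : ℕ} (h : H.DkNonempty k) :
    (∃ S, H.Adm k S ∧ S.card = H.gamma k) ∧ ∀ S, H.Adm k S → H.gamma k ≤ S.card := by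
  obtain ⟨S, hS, -⟩ := h
  have hne : {n | ∃ S, H.Adm k S ∧ S.card = n}.Nonempty := ⟨S.card, S, hS, rfl⟩
  exact ⟨Nat.sInf_mem hne, fun S' hS' => Nat.sInf_le ⟨S', hS', rfl⟩⟩

lemma gamma_parity15 {H : TSGraph α} {k : ℕ} (h : H.DkNonempty k) :
    H.gamma k % 2 = k % 2 := by
  obtain ⟨⟨S, hS, hcard⟩, -⟩ := gamma_min15 h
  obtain ⟨hsub, hdom, X, hX, hXc, f, hf⟩ := hS
  have hXS : X ⊆ S := fun x hx => (Finset.mem_inter.mp (hX hx)).1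
  have heven : Even (S \ X).card := by
    apply even_card_of_inv15 (f := f)
    intro v hv
    obtain ⟨h1, h2, h3⟩ := hf v hv
    refine ⟨h1, ?_, h3⟩
    intro he; rw [he] at h2; exact H.irrefl v h2
  have hsd : (S \ X).card = S.card - X.card := Finset.card_sdiff_of_subset hXS
  have hle : X.card ≤ S.card := Finset.card_le_card hXS
  rw [Nat.even_iff] at heven
  omega

lemma adm_union15 {G Gl Gr : TSGraph α} (hc : IsFalseTwin G Gl Gr)
    {k1 k2 : ℕ} {Sl Sr : Finset α} (h1 : Gl.Adm k1 Sl) (h2 : Gr.Adm k2 Sr) :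
    G.Adm (k1 + k2) (Sl ∪ Sr) := by
  obtain ⟨hd, hV, hA, hT⟩ := hc
  obtain ⟨hs1, hdom1, X1, hX1, hc1, f1, hf1⟩ := h1
  obtain ⟨hs2, hdom2, X2, hX2, hc2, f2, hf2⟩ := h2
  have hX1S : X1 ⊆ Sl := fun x hx => (Finset.mem_inter.mp (hX1 hx)).1
  have hX2S : X2 ⊆ Sr := fun x hx => (Finset.mem_inter.mp (hX2 hx)).1
  have hmemL : ∀ x ∈ Sl, x ∉ Gr.verts := fun x hx hxr =>
    (Finset.disjoint_left.mp hd (hs1 hx)) hxr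
  have hmemR : ∀ x ∈ Sr, x ∉ Gl.verts := fun x hx hxl =>
    (Finset.disjoint_right.mp hd (hs2 hx)) hxl
  refine ⟨?_, ?_, X1 ∪ X2, ?_, ?_, ?_⟩
  · rw [hV]; exact Finset.union_subset_union hs1 hs2
  · intro v hvV hvT
    rw [hV, Finset.mem_union] at hvV
    rcases hvV with hv | hv
    · have hvTl : v ∉ Gl.TS := fun hx => hvT (by rw [hT]; exact Finset.mem_union_left _ hx)
      rcases hdom1 v hv hvTl with h | ⟨u, hu, hadj⟩
      · exact Or.inl (Finset.mem_union_left _ h)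
      · exact Or.inr ⟨u, Finset.mem_union_left _ hu, (hA u v).mpr (Or.inl hadj)⟩
    · have hvTr : v ∉ Gr.TS := fun hx => hvT (by rw [hT]; exact Finset.mem_union_right _ hx)
      rcases hdom2 v hv hvTr with h | ⟨u, hu, hadj⟩
      · exact Or.inl (Finset.mem_union_right _ h)
      · exact Or.inr ⟨u, Finset.mem_union_right _ hu, (hA u v).mpr (Or.inr hadj)⟩
  · intro x hx
    rw [Finset.mem_union] at hx
    rw [Finset.mem_inter, hT]
    rcases hx with hx | hx
    · have := Finset.mem_inter.mp (hX1 hx)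
      exact ⟨Finset.mem_union_left _ this.1, Finset.mem_union_left _ this.2⟩
    · have := Finset.mem_inter.mp (hX2 hx)
      exact ⟨Finset.mem_union_right _ this.1, Finset.mem_union_right _ this.2⟩
  · rw [Finset.card_union_of_disjoint, hc1, hc2]
    exact Finset.disjoint_left.mpr fun x hx1 hx2 =>
      hmemL x (hX1S hx1) (hs2 (hX2S hx2))
  · refine ⟨fun v => if v ∈ Sl then f1 v else f2 v, ?_⟩
    intro v hv
    dsimp only
    rw [Finset.mem_sdiff, Finset.mem_union, Finset.mem_union, not_or] at hv
    obtain ⟨hvS, hvX1, hvX2⟩ := hv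
    rcases hvS with hvl | hvr
    · have hv1 : v ∈ Sl \ X1 := Finset.mem_sdiff.mpr ⟨hvl, hvX1⟩
      obtain ⟨hfv, hadj, hff⟩ := hf1 v hv1
      rw [Finset.mem_sdiff] at hfv
      have hfvl : f1 v ∈ Sl := hfv.1
      rw [if_pos hvl]
      refine ⟨?_, (hA _ _).mpr (Or.inl hadj), ?_⟩
      · rw [Finset.mem_sdiff, Finset.mem_union, Finset.mem_union, not_or]
        exact ⟨Or.inl hfvl, hfv.2, fun hx => hmemL _ hfvl (hs2 (hX2S hx))⟩
      · rw [if_pos hfvl, hff]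
    · have hvnl : v ∉ Sl := fun hx => hmemL v hx (hs2 hvr)
      have hv2 : v ∈ Sr \ X2 := Finset.mem_sdiff.mpr ⟨hvr, hvX2⟩
      obtain ⟨hfv, hadj, hff⟩ := hf2 v hv2
      rw [Finset.mem_sdiff] at hfv
      have hfvr : f2 v ∈ Sr := hfv.1
      rw [if_neg hvnl]
      have hfvnl : f2 v ∉ Sl := fun hx => hmemL _ hx (hs2 hfvr)
      refine ⟨?_, (hA _ _).mpr (Or.inr hadj), ?_⟩
      · rw [Finset.mem_sdiff, Finset.mem_union, Finset.mem_union, not_or]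
        exact ⟨Or.inr hfvr, fun hx => hmemL _ (hX1S hx) (hs2 hfvr), hfv.2⟩
      · rw [if_neg hfvnl, hff]

lemma adm_split15 {G Gl Gr : TSGraph α} (hc : IsFalseTwin G Gl Gr)
    {k : ℕ} {S : Finset α} (h : G.Adm k S) :
    ∃ k1 k2, k1 + k2 = k ∧ k1 ≤ Gl.TS.card ∧ k2 ≤ Gr.TS.card ∧
      Gl.Adm k1 (S ∩ Gl.verts) ∧ Gr.Adm k2 (S ∩ Gr.verts) ∧
      (S ∩ Gl.verts).card + (S ∩ Gr.verts).card = S.card := by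
  obtain ⟨hd, hV, hA, hT⟩ := hc
  obtain ⟨hsub, hdom, X, hX, hXc, f, hf⟩ := h
  have hXS : X ⊆ S := fun x hx => (Finset.mem_inter.mp (hX hx)).1
  have hXT : X ⊆ G.TS := fun x hx => (Finset.mem_inter.mp (hX hx)).2
  have hdlr : ∀ x ∈ Gl.verts, x ∉ Gr.verts := fun x hx => Finset.disjoint_left.mp hd hx
  have hsplitS : (S ∩ Gl.verts) ∪ (S ∩ Gr.verts) = S := by
    ext x
    simp only [Finset.mem_union, Finset.mem_inter]
    constructor
    · tauto
    · intro hx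
      have := hsub hx
      rw [hV, Finset.mem_union] at this
      tauto
  have hsplitX : (X ∩ Gl.verts) ∪ (X ∩ Gr.verts) = X := by
    ext x
    simp only [Finset.mem_union, Finset.mem_inter]
    constructor
    · tauto
    · intro hx
      have := hsub (hXS hx)
      rw [hV, Finset.mem_union] at this
      tauto
  have hdisjS : Disjoint (S ∩ Gl.verts) (S ∩ Gr.verts) :=
    hd.mono Finset.inter_subset_right Finset.inter_subset_right
  have hdisjX : Disjoint (X ∩ Gl.verts) (X ∩ Gr.verts) :=
    hd.mono Finset.inter_subset_right Finset.inter_subset_right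
  have hXlT : X ∩ Gl.verts ⊆ Gl.TS := by
    intro x hx
    rw [Finset.mem_inter] at hx
    have := hXT hx.1
    rw [hT, Finset.mem_union] at this
    rcases this with h' | h'
    · exact h'
    · exact absurd (Gr.TS_sub h') (fun hh => hdlr x hx.2 hh)
  have hXrT : X ∩ Gr.verts ⊆ Gr.TS := by
    intro x hx
    rw [Finset.mem_inter] at hx
    have := hXT hx.1
    rw [hT, Finset.mem_union] at this
    rcases this with h' | h'
    · exact absurd (Gl.TS_sub h') (fun hh => hdlr x hh hx.2)
    · exact h'
  refine ⟨(X ∩ Gl.verts).card, (X ∩ Gr.verts).card, ?_, Finset.card_le_card hXlT,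
    Finset.card_le_card hXrT, ?_, ?_, ?_⟩
  · rw [← Finset.card_union_of_disjoint hdisjX, hsplitX, hXc]
  · refine ⟨Finset.inter_subset_right, ?_, X ∩ Gl.verts, ?_, rfl, f, ?_⟩
    · intro v hv hvT
      have hvG : v ∈ G.verts := by rw [hV]; exact Finset.mem_union_left _ hv
      have hvTG : v ∉ G.TS := by
        rw [hT, Finset.mem_union]
        rintro (h' | h')
        · exact hvT h'
        · exact hdlr v hv (Gr.TS_sub h')
      rcases hdom v hvG hvTG with h' | ⟨u, hu, hadj⟩
      · exact Or.inl (Finset.mem_inter.mpr ⟨h', hv⟩)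
      · rcases (hA u v).mp hadj with ha | ha
        · exact Or.inr ⟨u, Finset.mem_inter.mpr ⟨hu, (Gl.adj_mem u v ha).1⟩, ha⟩
        · exact absurd (Gr.adj_mem u v ha).2 (hdlr v hv)
    · intro x hx
      have hx' := hXlT hx
      rw [Finset.mem_inter] at hx
      exact Finset.mem_inter.mpr ⟨Finset.mem_inter.mpr ⟨hXS hx.1, hx.2⟩, hx'⟩
    · intro v hv
      rw [Finset.mem_sdiff, Finset.mem_inter] at hv
      obtain ⟨⟨hvS, hvVl⟩, hvX⟩ := hv
      have hvSX : v ∈ S \ X := by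
        rw [Finset.mem_sdiff]
        exact ⟨hvS, fun hx => hvX (Finset.mem_inter.mpr ⟨hx, hvVl⟩)⟩
      obtain ⟨hfv, hadj, hff⟩ := hf v hvSX
      rw [Finset.mem_sdiff] at hfv
      have hadjl : Gl.Adj v (f v) := by
        rcases (hA v (f v)).mp hadj with ha | ha
        · exact ha
        · exact absurd (Gr.adj_mem _ _ ha).1 (hdlr v hvVl)
      have hfVl : f v ∈ Gl.verts := (Gl.adj_mem _ _ hadjl).2
      refine ⟨?_, hadjl, hff⟩
      rw [Finset.mem_sdiff, Finset.mem_inter]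
      exact ⟨⟨hfv.1, hfVl⟩, fun hx => hfv.2 (Finset.mem_inter.mp hx).1⟩
  · refine ⟨Finset.inter_subset_right, ?_, X ∩ Gr.verts, ?_, rfl, f, ?_⟩
    · intro v hv hvT
      have hvG : v ∈ G.verts := by rw [hV]; exact Finset.mem_union_right _ hv
      have hvTG : v ∉ G.TS := by
        rw [hT, Finset.mem_union]
        rintro (h' | h')
        · exact hdlr v (Gl.TS_sub h') hv
        · exact hvT h'
      rcases hdom v hvG hvTG with h' | ⟨u, hu, hadj⟩
      · exact Or.inl (Finset.mem_inter.mpr ⟨h', hv⟩)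
      · rcases (hA u v).mp hadj with ha | ha
        · exact absurd hv (hdlr v (Gl.adj_mem u v ha).2)
        · exact Or.inr ⟨u, Finset.mem_inter.mpr ⟨hu, (Gr.adj_mem u v ha).1⟩, ha⟩
    · intro x hx
      have hx' := hXrT hx
      rw [Finset.mem_inter] at hx
      exact Finset.mem_inter.mpr ⟨Finset.mem_inter.mpr ⟨hXS hx.1, hx.2⟩, hx'⟩
    · intro v hv
      rw [Finset.mem_sdiff, Finset.mem_inter] at hv
      obtain ⟨⟨hvS, hvVr⟩, hvX⟩ := hv
      have hvSX : v ∈ S \ X := by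
        rw [Finset.mem_sdiff]
        exact ⟨hvS, fun hx => hvX (Finset.mem_inter.mpr ⟨hx, hvVr⟩)⟩
      obtain ⟨hfv, hadj, hff⟩ := hf v hvSX
      rw [Finset.mem_sdiff] at hfv
      have hadjr : Gr.Adj v (f v) := by
        rcases (hA v (f v)).mp hadj with ha | ha
        · exact absurd hvVr (hdlr v (Gl.adj_mem _ _ ha).1)
        · exact ha
      have hfVr : f v ∈ Gr.verts := (Gr.adj_mem _ _ hadjr).2
      refine ⟨?_, hadjr, hff⟩
      rw [Finset.mem_sdiff, Finset.mem_inter]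
      exact ⟨⟨hfv.1, hfVr⟩, fun hx => hfv.2 (Finset.mem_inter.mp hx).1⟩
  · rw [← Finset.card_union_of_disjoint hdisjS, hsplitS]

lemma shape15 {H : TSGraph α} (hne : H.AllDkNonempty) (he : H.Eq2Holds) :
    H.alphaVal ≤ H.betaVal ∧ H.betaVal ≤ H.TS.card ∧ H.alphaVal ≤ H.TS.card ∧
    (H.betaVal - H.alphaVal) % 2 = 0 ∧
    ∀ k ≤ H.TS.card, H.gamma k = H.minVal + myPhi15 H.alphaVal H.betaVal k := by
  have setNE : {n | ∃ k ≤ H.TS.card, H.gamma k = n}.Nonempty :=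
    ⟨H.gamma 0, 0, Nat.zero_le _, rfl⟩
  obtain ⟨k0, hk0, hk0e⟩ : ∃ k0 ≤ H.TS.card, H.gamma k0 = H.minVal := Nat.sInf_mem setNE
  have Sne : {k | k ≤ H.TS.card ∧ H.gamma k = H.minVal}.Nonempty := ⟨k0, hk0, hk0e⟩
  have Sbdd : BddAbove {k | k ≤ H.TS.card ∧ H.gamma k = H.minVal} :=
    ⟨H.TS.card, fun k hk => hk.1⟩
  obtain ⟨hat, hae⟩ : H.alphaVal ≤ H.TS.card ∧ H.gamma H.alphaVal = H.minVal :=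
    Nat.sInf_mem Sne
  obtain ⟨hbt, hbe⟩ : H.betaVal ≤ H.TS.card ∧ H.gamma H.betaVal = H.minVal :=
    Nat.sSup_mem Sne Sbdd
  have hab : H.alphaVal ≤ H.betaVal := Nat.sInf_le ⟨hbt, hbe⟩
  have hpar : ∀ k ≤ H.TS.card, H.gamma k % 2 = k % 2 := fun k hk => gamma_parity15 (hne k hk)
  have heab : (H.betaVal - H.alphaVal) % 2 = 0 := by
    have h1 := hpar _ hat; have h2 := hpar _ hbt
    omega
  refine ⟨hab, hbt, hat, heab, ?_⟩
  intro k hk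
  rcases le_or_gt k H.alphaVal with h1 | h1
  · have := (he k hk).1 h1
    unfold myPhi15; split_ifs <;> omega
  rcases le_or_gt H.betaVal k with h2 | h2
  · have := (he k hk).2.1 h2
    unfold myPhi15; split_ifs <;> omega
  rcases Nat.even_or_odd (k - H.alphaVal) with h3 | h3
  · have := (he k hk).2.2.1 h1 h2 h3
    rw [Nat.even_iff] at h3
    unfold myPhi15; split_ifs <;> omega
  · have h3' := h3
    rw [Nat.odd_iff] at h3'
    have := (he k hk).2.2.2 h1 h2 (by rw [Nat.even_iff]; omega)
    unfold myPhi15; split_ifs <;> omega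

end TSGraph

open TSGraph in
/-- For a false twin composition `G = Gl ⊙ Gr` with all `D_k`
families nonempty, if Equation (2) holds for `Gl` and `Gr`, then it holds
for `G`. -/
theorem stmt15 {α : Type*} [DecidableEq α] (G Gl Gr : TSGraph α)
    (hcomp : IsFalseTwin G Gl Gr)
    (hG : G.AllDkNonempty) (hGl : Gl.AllDkNonempty) (hGr : Gr.AllDkNonempty)
    (hl : Gl.Eq2Holds) (hr : Gr.Eq2Holds) :
    G.Eq2Holds := by
  obtain ⟨hab1, hbt1, hat1, he1, hF1⟩ := shape15 hGl hl
  obtain ⟨hab2, hbt2, hat2, he2, hF2⟩ := shape15 hGr hr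
  have htG : G.TS.card = Gl.TS.card + Gr.TS.card := by
    rw [hcomp.2.2.2]
    exact Finset.card_union_of_disjoint (hcomp.1.mono Gl.TS_sub Gr.TS_sub)
  have hABle : Gl.alphaVal + Gr.alphaVal ≤ Gl.betaVal + Gr.betaVal := by omega
  have hBt : Gl.betaVal + Gr.betaVal ≤ Gl.TS.card + Gr.TS.card := by omega
  have hABe : ((Gl.betaVal + Gr.betaVal) - (Gl.alphaVal + Gr.alphaVal)) % 2 = 0 := by omega
  have hAt : Gl.alphaVal + Gr.alphaVal ≤ Gl.TS.card + Gr.TS.card := by omega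
  have key : ∀ k ≤ Gl.TS.card + Gr.TS.card, G.gamma k =
      (Gl.minVal + Gr.minVal) +
        myPhi15 (Gl.alphaVal + Gr.alphaVal) (Gl.betaVal + Gr.betaVal) k := by
    intro k hk
    apply le_antisymm
    · obtain ⟨k1, k2, hsum, h1, h2, hphi⟩ := myPhi15_ub hab1 hbt1 hab2 hbt2 he1 he2 hk
      obtain ⟨⟨Sl, hSl, hcl⟩, -⟩ := gamma_min15 (hGl k1 h1)
      obtain ⟨⟨Sr, hSr, hcr⟩, -⟩ := gamma_min15 (hGr k2 h2)
      have hadm := adm_union15 hcomp hSl hSr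
      rw [hsum] at hadm
      have hle := (gamma_min15 (hG k (by omega))).2 _ hadm
      have hcu := Finset.card_union_le Sl Sr
      have e1 := hF1 k1 h1
      have e2 := hF2 k2 h2
      omega
    · obtain ⟨⟨S, hS, hcS⟩, -⟩ := gamma_min15 (hG k (by omega))
      obtain ⟨k1, k2, hsum, h1, h2, hadml, hadmr, hcards⟩ := adm_split15 hcomp hS
      have g1 := (gamma_min15 (hGl k1 h1)).2 _ hadml
      have g2 := (gamma_min15 (hGr k2 h2)).2 _ hadmr
      have e1 := hF1 k1 h1
      have e2 := hF2 k2 h2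
      have hlb := myPhi15_lb (k1 := k1) (k2 := k2) hab1 hab2 he1 he2
      rw [hsum] at hlb
      omega
  have hPhiA : myPhi15 (Gl.alphaVal + Gr.alphaVal) (Gl.betaVal + Gr.betaVal)
      (Gl.alphaVal + Gr.alphaVal) = 0 := by
    unfold myPhi15; split_ifs <;> omega
  have hPhi0 : ∀ k, myPhi15 (Gl.alphaVal + Gr.alphaVal) (Gl.betaVal + Gr.betaVal) k = 0 ↔
      (Gl.alphaVal + Gr.alphaVal ≤ k ∧ k ≤ Gl.betaVal + Gr.betaVal ∧
        (k - (Gl.alphaVal + Gr.alphaVal)) % 2 = 0) := by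
    intro k; unfold myPhi15; split_ifs <;> omega
  have hmin : G.minVal = Gl.minVal + Gr.minVal := by
    apply le_antisymm
    · apply Nat.sInf_le
      exact ⟨Gl.alphaVal + Gr.alphaVal, by omega, by rw [key _ hAt]; omega⟩
    · have hb : ∀ n ∈ {n | ∃ k ≤ G.TS.card, G.gamma k = n}, Gl.minVal + Gr.minVal ≤ n := by
        rintro n ⟨k, hk, rfl⟩
        rw [key k (by omega)]
        omega
      exact le_csInf ⟨G.gamma 0, 0, Nat.zero_le _, rfl⟩ hb
  have hset : {k | k ≤ G.TS.card ∧ G.gamma k = G.minVal} =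
      {k | Gl.alphaVal + Gr.alphaVal ≤ k ∧ k ≤ Gl.betaVal + Gr.betaVal ∧
        (k - (Gl.alphaVal + Gr.alphaVal)) % 2 = 0} := by
    ext k
    simp only [Set.mem_setOf_eq, hmin]
    constructor
    · rintro ⟨hk, hg⟩
      rw [key k (by omega)] at hg
      exact (hPhi0 k).mp (by omega)
    · rintro ⟨h1', h2', h3'⟩
      refine ⟨by omega, ?_⟩
      rw [key k (by omega)]
      have := (hPhi0 k).mpr ⟨h1', h2', h3'⟩
      omega
  have halpha : G.alphaVal = Gl.alphaVal + Gr.alphaVal := by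
    show sInf {k | k ≤ G.TS.card ∧ G.gamma k = G.minVal} = _
    rw [hset]
    apply le_antisymm
    · exact Nat.sInf_le ⟨le_refl _, hABle, by omega⟩
    · exact le_csInf ⟨_, le_refl _, hABle, by omega⟩ (fun k hk => hk.1)
  have hbeta : G.betaVal = Gl.betaVal + Gr.betaVal := by
    show sSup {k | k ≤ G.TS.card ∧ G.gamma k = G.minVal} = _
    rw [hset]
    apply le_antisymm
    · exact csSup_le ⟨_, hABle, le_refl _, hABe⟩ (fun k hk => hk.2.1)
    · exact le_csSup ⟨Gl.betaVal + Gr.betaVal, fun k hk => hk.2.1⟩ ⟨hABle, le_refl _, hABe⟩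
  intro k hk
  have hk' : k ≤ Gl.TS.card + Gr.TS.card := by omega
  rw [halpha, hbeta, hmin, key k hk']
  refine ⟨fun h => ?_, fun h => ?_, fun h h' h'' => ?_, fun h h' h'' => ?_⟩
  · unfold myPhi15; split_ifs <;> omega
  · unfold myPhi15; split_ifs <;> omega
  · rw [Nat.even_iff] at h''
    unfold myPhi15; split_ifs <;> omega
  · rw [Nat.even_iff] at h''
    unfold myPhi15; split_ifs <;> omega
end

section
/- Let G = G_l ⊕ G_r be an attachment composition and let G̈ = G_l ⊗ G_r be the true twin composition of the same pair. For every 0 ≤ k ≤ |TS(G)|, if D_k(G) ≠ ∅ then D_k(G̈) ≠ ∅ and γ_k(G) ≥ γ_k(G̈). -/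
open TSGraph in
/-- Let `G = Gl ⊕ Gr` and let `G2 = Gl ⊗ Gr` be the true twin
composition of the same pair. For every `0 ≤ k ≤ |TS(G)|`, if `D_k(G) ≠ ∅`
then `D_k(G2) ≠ ∅` and `γ_k(G) ≥ γ_k(G2)`. -/
theorem stmt16 {α : Type*} [DecidableEq α] (G G2 Gl Gr : TSGraph α)
    (hG : IsAttach G Gl Gr) (hG2 : IsTrueTwin G2 Gl Gr) :
    ∀ k ≤ G.TS.card, G.DkNonempty k →
      G2.DkNonempty k ∧ G2.gamma k ≤ G.gamma k := by
  obtain ⟨hdisj, hverts, hadj, hts⟩ := hG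
  obtain ⟨hdisj2, hverts2, hadj2, hts2⟩ := hG2
  intro k hk ⟨S, hS, _⟩
  -- key: any admissible set for G is admissible for G2
  have key : ∀ T, G.Adm k T → G2.Adm k T := by
    rintro T ⟨hsub, hdom, X, hX, hXcard, f, hf⟩
    refine ⟨by rw [hverts2, ← hverts]; exact hsub, ?_, X, ?_, hXcard, f, ?_⟩
    · intro v hv hvts
      have hv' : v ∈ G.verts := by rw [hverts, ← hverts2]; exact hv
      have hvts' : v ∉ G.TS := by
        rw [hts]; intro h
        exact hvts (by rw [hts2]; exact Finset.mem_union_left _ h)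
      rcases hdom v hv' hvts' with h | ⟨u, hu, huv⟩
      · exact Or.inl h
      · exact Or.inr ⟨u, hu, (hadj2 u v).2 ((hadj u v).1 huv)⟩
    · intro x hx
      have := hX hx
      rw [Finset.mem_inter] at this ⊢
      exact ⟨this.1, by rw [hts2]; exact Finset.mem_union_left _ (hts ▸ this.2)⟩
    · intro v hv
      obtain ⟨h1, h2, h3⟩ := hf v hv
      exact ⟨h1, (hadj2 _ _).2 ((hadj _ _).1 h2), h3⟩
  -- the set of admissible cardinalities for G2 is nonempty
  have hne : {n | ∃ T, G2.Adm k T ∧ T.card = n}.Nonempty :=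
    ⟨S.card, S, key S hS, rfl⟩
  have hmem := Nat.sInf_mem hne
  obtain ⟨S0, hS0, hS0card⟩ := hmem
  constructor
  · exact ⟨S0, hS0, fun S' hS' => by
      rw [hS0card]; exact Nat.sInf_le ⟨S', hS', rfl⟩⟩
  · have hneG : {n | ∃ T, G.Adm k T ∧ T.card = n}.Nonempty := ⟨S.card, S, hS, rfl⟩
    obtain ⟨S1, hS1, hS1card⟩ := Nat.sInf_mem hneG
    calc G2.gamma k ≤ S1.card := Nat.sInf_le ⟨S1, key S1 hS1, rfl⟩
      _ = G.gamma k := hS1card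
end
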